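/- arXiv:1602.03612 — 5 statements merged into one kernel-verified Lean document; each statement's English description precedes it below -/
import Mathlib

section
/- (Representation Theorem) A positive measurable function L on (0,c] is slowly varying at 0 if and only if there exist a measurable function η on (0,c] with lim_{t→0⁺} η(t) = η₀ ∈ (0,∞) and a continuous function ε on (0,c] with lim_{t→0⁺} ε(t) = 0, such that L(t) = η(t)·exp(∫_t^c ε(r)/r dr) for all 0 < t ≤ c. -/
open Filter Set intervalIntegral

section Auxiliary

open MeasureTheory
open scoped ENNReal

private lemma uct (h : ℝ → ℝ) (hm : Measurable h)
    (hp : ∀ u : ℝ, Tendsto (fun x => h (x + u) - h x) atTop (nhds 0)) (ε : ℝ) (hε : 0 < ε) :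
    ∀ᶠ x in atTop, ∀ u ∈ Set.Icc (0:ℝ) 1, |h (x + u) - h x| ≤ ε := by
  by_contra hcon
  rw [Filter.not_eventually] at hcon
  have hseq : ∀ n : ℕ, ∃ x : ℝ, (n : ℝ) ≤ x ∧ ∃ u ∈ Set.Icc (0:ℝ) 1, ε < |h (x + u) - h x| := by
    intro n
    rcases ((eventually_ge_atTop (n:ℝ)).and_frequently hcon).exists with ⟨x, hx1, hx2⟩
    push_neg at hx2
    obtain ⟨u, hu, hu2⟩ := hx2
    exact ⟨x, hx1, u, hu, hu2⟩
  choose x hx u hu hbig using hseq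
  have hxtop : Tendsto x atTop atTop :=
    tendsto_atTop_mono hx tendsto_natCast_atTop_atTop
  have hxutop : Tendsto (fun n => x n + u n) atTop atTop :=
    tendsto_atTop_mono (fun n => le_add_of_nonneg_right (hu n).1) hxtop
  -- the two families of sets
  set A : ℕ → Set ℝ := fun n =>
    Icc 0 2 ∩ ⋂ m ∈ {m | n ≤ m}, {v | |h (x m + v) - h (x m)| ≤ ε / 2} with hA
  set B : ℕ → Set ℝ := fun n =>
    Icc 0 2 ∩ ⋂ m ∈ {m | n ≤ m}, {v | |h (x m + u m + v) - h (x m + u m)| ≤ ε / 2} with hB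
  have measA : ∀ n, MeasurableSet (A n) := by
    intro n
    refine measurableSet_Icc.inter (MeasurableSet.biInter (to_countable _) fun m _ => ?_)
    exact measurableSet_le ((hm.comp (measurable_const.add measurable_id)).sub
      measurable_const).abs measurable_const
  have measB : ∀ n, MeasurableSet (B n) := by
    intro n
    refine measurableSet_Icc.inter (MeasurableSet.biInter (to_countable _) fun m _ => ?_)
    exact measurableSet_le ((hm.comp (measurable_const.add measurable_id)).sub
      measurable_const).abs measurable_const
  have hmonoA : Monotone A := by
    intro i j hij
    exact inter_subset_inter_right _ (biInter_subset_biInter_left fun m hm' => hij.trans hm')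
  have hmonoB : Monotone B := by
    intro i j hij
    exact inter_subset_inter_right _ (biInter_subset_biInter_left fun m hm' => hij.trans hm')
  have hcover : ∀ (y : ℕ → ℝ), Tendsto y atTop atTop →
      (⋃ n, (Icc (0:ℝ) 2 ∩ ⋂ m ∈ {m | n ≤ m}, {v | |h (y m + v) - h (y m)| ≤ ε / 2})) = Icc 0 2 := by
    intro y hy
    apply Subset.antisymm (iUnion_subset fun n => inter_subset_left)
    intro v hv
    have : Tendsto (fun m => h (y m + v) - h (y m)) atTop (nhds 0) := by
      have := (hp v).comp hy
      exact this
    have hev : ∀ᶠ m in atTop, |h (y m + v) - h (y m)| ≤ ε / 2 := by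
      have h2 := NormedAddCommGroup.tendsto_nhds_zero.mp this (ε/2) (by linarith)
      exact h2.mono fun m hm' => le_of_lt (by simpa using hm')
    obtain ⟨n, hn⟩ := eventually_atTop.mp hev
    exact mem_iUnion.2 ⟨n, hv, mem_biInter fun m hm' => hn m hm'⟩
  have hvol : volume (Icc (0:ℝ) 2) = 2 := by
    rw [Real.volume_Icc]; norm_num
  have hlimA : Tendsto (fun n => volume (A n)) atTop (nhds 2) := by
    have := tendsto_measure_iUnion_atTop (μ := volume) hmonoA
    rwa [hcover x hxtop, hvol] at this
  have hlimB : Tendsto (fun n => volume (B n)) atTop (nhds 2) := by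
    have := tendsto_measure_iUnion_atTop (μ := volume) hmonoB
    rwa [hcover _ hxutop, hvol] at this
  have h32 : (3/2 : ℝ≥0∞) < 2 := by
    rw [ENNReal.div_lt_iff (by norm_num) (by norm_num)]
    norm_num
  obtain ⟨N, hNA, hNB⟩ :=
    ((hlimA.eventually (eventually_gt_nhds h32)).and
      (hlimB.eventually (eventually_gt_nhds h32))).exists
  -- translate B N
  set T : Set ℝ := (fun v => v - u N) ⁻¹' B N with hT
  have measT : MeasurableSet T := measB N |>.preimage (measurable_id.sub measurable_const)
  have hvolT : volume T = volume (B N) := by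
    rw [hT]
    simp only [sub_eq_add_neg]
    exact measure_preimage_add_right volume (-u N) (B N)
  have hsub : A N ∪ T ⊆ Icc 0 3 := by
    rintro v (hv | hv)
    · exact ⟨hv.1.1, hv.1.2.trans (by norm_num)⟩
    · have hvB : v - u N ∈ B N := hv
      obtain ⟨⟨hb1, hb2⟩, -⟩ := hvB
      constructor
      · linarith [(hu N).1]
      · linarith [(hu N).2]
  have hinter : (A N ∩ T).Nonempty := by
    rw [nonempty_iff_ne_empty]
    intro hempty
    have h1 : volume (A N ∪ T) + volume (A N ∩ T) = volume (A N) + volume T :=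
      measure_union_add_inter _ measT
    rw [hempty, measure_empty, add_zero] at h1
    have h2 : volume (A N ∪ T) ≤ volume (Icc (0:ℝ) 3) := measure_mono hsub
    rw [Real.volume_Icc] at h2
    have h3 : volume (A N) + volume T > 3/2 + 3/2 := by
      rw [hvolT]; exact ENNReal.add_lt_add hNA hNB
    rw [← h1] at h3
    have : ENNReal.ofReal (3 - 0) = 3 := by norm_num
    rw [this] at h2
    have : (3/2 + 3/2 : ℝ≥0∞) = 3 := by norm_num
    rw [this] at h3
    exact absurd h2 (not_le.2 h3)
  obtain ⟨v, hvA, hvT⟩ := hinter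
  have h1 : |h (x N + v) - h (x N)| ≤ ε / 2 := by
    have := hvA.2
    exact mem_iInter₂.mp this N (by simp)
  have h2 : |h (x N + u N + (v - u N)) - h (x N + u N)| ≤ ε / 2 := by
    have hvB : v - u N ∈ B N := hvT
    exact mem_iInter₂.mp hvB.2 N (by simp)
  have heq : x N + u N + (v - u N) = x N + v := by ring
  rw [heq] at h2
  have : |h (x N + u N) - h (x N)| ≤ ε := by
    have := abs_sub_abs_le_abs_sub (h (x N + v) - h (x N)) (h (x N + v) - h (x N + u N))
    calc |h (x N + u N) - h (x N)|
        = |(h (x N + v) - h (x N)) - (h (x N + v) - h (x N + u N))| := by ring_nf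
      _ ≤ |h (x N + v) - h (x N)| + |h (x N + v) - h (x N + u N)| := abs_sub _ _
      _ ≤ ε / 2 + ε / 2 := add_le_add h1 h2
      _ = ε := by ring
  exact absurd this (not_le.2 (hbig N))

private lemma log_representation (h : ℝ → ℝ) (hm : Measurable h)
    (hp : ∀ u : ℝ, Tendsto (fun x => h (x + u) - h x) atTop (nhds 0)) :
    ∃ (ρ εt : ℝ → ℝ) (C : ℝ),
      Measurable ρ ∧ Continuous εt ∧
      Tendsto ρ atTop (nhds 0) ∧ Tendsto εt atTop (nhds 0) ∧
      ∀ᶠ x in atTop, h x = ρ x + C + ∫ t in (0:ℝ)..x, εt t := by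
  -- a point beyond which `h` has increments bounded by 1
  obtain ⟨X₁, hX₁⟩ := eventually_atTop.mp (uct h hm hp 1 one_pos)
  set X₀ : ℝ := max X₁ 0 with hX₀def
  have hX₀nn : 0 ≤ X₀ := le_max_right _ _
  have hX₀ : ∀ x ≥ X₀, ∀ u ∈ Set.Icc (0:ℝ) 1, |h (x + u) - h x| ≤ 1 :=
    fun x hx => hX₁ x ((le_max_left _ _).trans hx)
  set g : ℝ → ℝ := fun x => h (max x X₀) with hgdef
  have hgm : Measurable g := hm.comp (measurable_id.max measurable_const)
  have hgh : ∀ x ≥ X₀, g x = h x := fun x hx => by simp [hgdef, max_eq_left hx]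
  -- growth bound for h on [X₀, X₀ + n]
  have hbound : ∀ n : ℕ, ∀ y ∈ Icc X₀ (X₀ + n), |h y| ≤ |h X₀| + n := by
    intro n
    induction n with
    | zero => intro y hy; have : y = X₀ := le_antisymm (by simpa using hy.2) hy.1; simp [this]
    | succ n ih =>
      intro y hy
      by_cases hcase : y ≤ X₀ + n
      · have := ih y ⟨hy.1, hcase⟩
        push_cast
        push_cast at this
        linarith
      · push_neg at hcase
        have hXn : X₀ + (n:ℝ) ≥ X₀ := le_add_of_nonneg_right (by positivity)
        have hu : y - (X₀ + n) ∈ Icc (0:ℝ) 1 := by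
          have h2 := hy.2
          push_cast at h2
          constructor
          · linarith
          · linarith
        have h1 := hX₀ (X₀ + n) (by linarith) _ hu
        have h2 : X₀ + (n:ℝ) + (y - (X₀ + n)) = y := by ring
        rw [h2] at h1
        have h3 := ih (X₀ + n) ⟨by linarith, le_refl _⟩
        push_cast
        have := abs_sub_abs_le_abs_sub (h y) (h (X₀ + n))
        linarith
  -- g is bounded on bounded sets, hence locally integrable
  have hgloc : LocallyIntegrable g volume := by
    rw [locallyIntegrable_iff]
    intro K hK
    obtain ⟨r, hr0, hrK⟩ : ∃ r : ℝ, 0 < r ∧ K ⊆ Icc (-r) r := by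
      rcases K.eq_empty_or_nonempty with rfl | hne
      · exact ⟨1, one_pos, empty_subset _⟩
      · obtain ⟨r, hr⟩ := hK.isBounded.subset_closedBall 0
        refine ⟨max r 1, by positivity, fun y hy => ?_⟩
        have := hr hy
        rw [Real.closedBall_eq_Icc] at this
        constructor
        · have := this.1; simp only [zero_sub] at this
          have : -r ≤ y := this
          have hr1 : r ≤ max r 1 := le_max_left _ _
          linarith
        · have := this.2; simp only [zero_add] at this
          exact this.trans (le_max_left _ _)
    obtain ⟨n, hn⟩ := exists_nat_ge r
    refine (IntegrableOn.mono_set ?_ hrK)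
    have hC : ∀ y ∈ Icc (-r) r, ‖g y‖ ≤ |h X₀| + n := by
      intro y hy
      have hmem : max y X₀ ∈ Icc X₀ (X₀ + n) := by
        constructor
        · exact le_max_right _ _
        · rcases le_or_gt y X₀ with hc | hc
          · rw [max_eq_right hc]; exact le_add_of_nonneg_right (by positivity)
          · rw [max_eq_left hc.le]
            have := hy.2
            have : y ≤ (n:ℝ) := this.trans hn
            linarith
      simpa [hgdef] using hbound n _ hmem
    refine Integrable.mono' (integrableOn_const (lt_top_iff_ne_top.mp ?_)) hgm.aestronglyMeasurable
      (((ae_restrict_iff' measurableSet_Icc).2 (Eventually.of_forall hC)))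
    rw [Real.volume_Icc]
    exact ENNReal.ofReal_lt_top
  have gint : ∀ a b : ℝ, IntervalIntegrable g volume a b := fun a b =>
    (hgloc.integrableOn_isCompact isCompact_uIcc).intervalIntegrable
  -- uniform convergence theorem for g
  have gUCT : ∀ δ : ℝ, 0 < δ → ∃ x₁ : ℝ, ∀ x ≥ x₁, ∀ u ∈ Icc (0:ℝ) 1, |g (x + u) - g x| ≤ δ := by
    intro δ hδ
    obtain ⟨x₁, hx₁⟩ := eventually_atTop.mp (uct h hm hp δ hδ)
    refine ⟨max x₁ X₀, fun x hx u hu => ?_⟩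
    have hx1 : x₁ ≤ x := (le_max_left _ _).trans hx
    have hx0 : X₀ ≤ x := (le_max_right _ _).trans hx
    rw [hgh x hx0, hgh (x + u) (by linarith [hu.1])]
    exact hx₁ x hx1 u hu
  -- primitives
  set F : ℝ → ℝ := fun y => ∫ t in (0:ℝ)..y, g t with hFdef
  have hFcont : Continuous F := intervalIntegral.continuous_primitive (fun a b => gint a b) 0
  set b : ℝ → ℝ := fun x => ∫ t in x..(x+1), g t with hbdef
  have hbeq : ∀ x, b x = F (x+1) - F x := by
    intro x
    rw [hbdef, hFdef]
    exact (intervalIntegral.integral_interval_sub_left (gint 0 (x+1)) (gint 0 x)).symm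
  have hbcont : Continuous b := by
    have : Continuous fun x => F (x+1) - F x :=
      (hFcont.comp (continuous_id.add continuous_const)).sub hFcont
    exact continuous_congr (fun x => (hbeq x).symm) |>.mp this
  set Fb : ℝ → ℝ := fun y => ∫ t in (0:ℝ)..y, b t with hFbdef
  set Bf : ℝ → ℝ := fun x => ∫ t in x..(x+1), b t with hBdef
  set εt : ℝ → ℝ := fun x => b (x+1) - b x with hεtdef
  have hεtcont : Continuous εt := (hbcont.comp (continuous_id.add continuous_const)).sub hbcont
  have hBeq : ∀ x, Bf x = Fb (x+1) - Fb x := by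
    intro x
    rw [hBdef, hFbdef]
    exact (intervalIntegral.integral_interval_sub_left
      ((hbcont.intervalIntegrable _ _)) ((hbcont.intervalIntegrable _ _))).symm
  have hBderiv : ∀ x : ℝ, HasDerivAt Bf (εt x) x := by
    intro x
    have h1 : HasDerivAt Fb (b x) x := (hbcont.integral_hasStrictDerivAt 0 x).hasDerivAt
    have h2 : HasDerivAt (fun y => Fb (y+1)) (b (x+1)) x := by
      have := ((hbcont.integral_hasStrictDerivAt 0 (x+1)).hasDerivAt).comp x
        ((hasDerivAt_id x).add_const 1)
      rw [mul_one] at this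
      exact this
    exact (h2.sub h1).congr_of_eventuallyEq (Eventually.of_forall hBeq)
  have hBint : ∀ x : ℝ, Bf x - Bf 0 = ∫ t in (0:ℝ)..x, εt t := by
    intro x
    rw [intervalIntegral.integral_eq_sub_of_hasDerivAt (fun t _ => hBderiv t)
      (hεtcont.intervalIntegrable _ _)]
  -- the three estimates
  have est1 : ∀ δ : ℝ, 0 < δ → ∃ x₁, ∀ x ≥ x₁, |b x - g x| ≤ δ := by
    intro δ hδ
    obtain ⟨x₁, hx₁⟩ := gUCT δ hδ
    refine ⟨x₁, fun x hx => ?_⟩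
    have hsub : b x - g x = ∫ t in x..(x+1), (g t - g x) := by
      rw [intervalIntegral.integral_sub (gint _ _) (intervalIntegrable_const),
        intervalIntegral.integral_const]
      simp [hbdef]
    rw [hsub]
    have := intervalIntegral.norm_integral_le_of_norm_le_const (C := δ) (a := x) (b := x+1)
      (f := fun t => g t - g x) ?_
    · simpa using this
    · intro t ht
      rw [uIoc_of_le (by linarith : x ≤ x + 1)] at ht
      have hu : t - x ∈ Icc (0:ℝ) 1 := ⟨by linarith [ht.1], by linarith [ht.2]⟩
      have := hx₁ x hx _ hu
      rw [show x + (t - x) = t by ring] at this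
      simpa [Real.norm_eq_abs] using this
  have bshift : ∀ x d : ℝ, b (x + d) = ∫ s in x..(x+1), g (s + d) := by
    intro x d
    rw [intervalIntegral.integral_comp_add_right (fun t => g t) d]
    show (∫ t in (x+d)..(x+d+1), g t) = ∫ t in (x+d)..(x+1+d), g t
    rw [show x+1+d = x+d+1 by ring]
  have est_b : ∀ δ : ℝ, 0 < δ → ∃ x₁, ∀ x ≥ x₁, ∀ d ∈ Icc (0:ℝ) 1, |b (x + d) - b x| ≤ δ := by
    intro δ hδ
    obtain ⟨x₁, hx₁⟩ := gUCT δ hδ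
    refine ⟨x₁, fun x hx d hd => ?_⟩
    have hint : IntervalIntegrable (fun s => g (s + d)) volume x (x+1) := by
      have := (gint (x + d) (x + 1 + d)).comp_add_right d
      rw [show x + d - d = x by ring, show x + 1 + d - d = x + 1 by ring] at this
      exact this
    have hsub : b (x + d) - b x = ∫ s in x..(x+1), (g (s + d) - g s) := by
      rw [intervalIntegral.integral_sub hint (gint _ _), ← bshift]
    rw [hsub]
    have := intervalIntegral.norm_integral_le_of_norm_le_const (C := δ) (a := x) (b := x+1)
      (f := fun s => g (s + d) - g s) ?_
    · simpa using this
    · intro s hs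
      rw [uIoc_of_le (by linarith : x ≤ x + 1)] at hs
      have := hx₁ s (by linarith [hs.1]) d hd
      simpa [Real.norm_eq_abs] using this
  have est2 : ∀ δ : ℝ, 0 < δ → ∃ x₁, ∀ x ≥ x₁, |Bf x - b x| ≤ δ := by
    intro δ hδ
    obtain ⟨x₁, hx₁⟩ := est_b δ hδ
    refine ⟨x₁, fun x hx => ?_⟩
    have hsub : Bf x - b x = ∫ t in x..(x+1), (b t - b x) := by
      rw [intervalIntegral.integral_sub (hbcont.intervalIntegrable _ _) intervalIntegrable_const,
        intervalIntegral.integral_const]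
      simp [hBdef]
    rw [hsub]
    have := intervalIntegral.norm_integral_le_of_norm_le_const (C := δ) (a := x) (b := x+1)
      (f := fun t => b t - b x) ?_
    · simpa using this
    · intro t ht
      rw [uIoc_of_le (by linarith : x ≤ x + 1)] at ht
      have hu : t - x ∈ Icc (0:ℝ) 1 := ⟨by linarith [ht.1], by linarith [ht.2]⟩
      have := hx₁ x hx _ hu
      rw [show x + (t - x) = t by ring] at this
      simpa [Real.norm_eq_abs] using this
  have est3 : ∀ δ : ℝ, 0 < δ → ∃ x₁, ∀ x ≥ x₁, |εt x| ≤ δ := by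
    intro δ hδ
    obtain ⟨x₁, hx₁⟩ := est_b δ hδ
    refine ⟨x₁, fun x hx => ?_⟩
    have := hx₁ x hx 1 ⟨zero_le_one, le_refl _⟩
    simpa [hεtdef] using this
  -- conclude
  have hFbcont : Continuous Fb :=
    intervalIntegral.continuous_primitive (fun a b => hbcont.intervalIntegrable a b) 0
  have hBfcont : Continuous Bf := by
    have : Continuous fun x => Fb (x+1) - Fb x :=
      (hFbcont.comp (continuous_id.add continuous_const)).sub hFbcont
    exact continuous_congr (fun x => (hBeq x).symm) |>.mp this
  refine ⟨fun x => g x - Bf x, εt, Bf 0, hgm.sub ?_, hεtcont, ?_, ?_, ?_⟩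
  · exact hBfcont.measurable
  · rw [NormedAddCommGroup.tendsto_nhds_zero]
    intro δ hδ
    obtain ⟨x₁, h1⟩ := est1 (δ/3) (by linarith)
    obtain ⟨x₂, h2⟩ := est2 (δ/3) (by linarith)
    rw [eventually_atTop]
    refine ⟨max x₁ x₂, fun x hx => ?_⟩
    have e1 := h1 x ((le_max_left _ _).trans hx)
    have e2 := h2 x ((le_max_right _ _).trans hx)
    have : |g x - Bf x| ≤ 2 * δ / 3 := by
      have := abs_sub (g x - b x) (Bf x - b x)
      calc |g x - Bf x| = |(g x - b x) - (Bf x - b x)| := by ring_nf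
        _ ≤ |g x - b x| + |Bf x - b x| := abs_sub _ _
        _ ≤ δ/3 + δ/3 := add_le_add (by rw [abs_sub_comm]; exact e1) e2
        _ = 2 * δ / 3 := by ring
    rw [Real.norm_eq_abs]
    linarith
  · rw [NormedAddCommGroup.tendsto_nhds_zero]
    intro δ hδ
    obtain ⟨x₁, h1⟩ := est3 (δ/2) (by linarith)
    rw [eventually_atTop]
    exact ⟨x₁, fun x hx => by
      have := h1 x hx; rw [Real.norm_eq_abs]; linarith⟩
  · rw [eventually_atTop]
    refine ⟨X₀, fun x hx => ?_⟩
    rw [← hgh x hx, ← hBint x]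
    ring

end Auxiliary

/-- Representation theorem for slowly varying functions at `0`. -/
theorem slowly_varying_iff_representation
    (c : ℝ) (hc : 0 < c) (L : ℝ → ℝ) (hLmeas : Measurable L)
    (hLpos : ∀ t ∈ Set.Ioc 0 c, 0 < L t) :
    (∀ ξ : ℝ, 0 < ξ →
        Tendsto (fun t => L (ξ * t) / L t) (nhdsWithin 0 (Set.Ioi 0)) (nhds 1)) ↔
    ∃ (η : ℝ → ℝ) (ε : ℝ → ℝ) (η₀ : ℝ),
      Measurable η ∧ 0 < η₀ ∧
      Tendsto η (nhdsWithin 0 (Set.Ioi 0)) (nhds η₀) ∧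
      ContinuousOn ε (Set.Ioc 0 c) ∧
      Tendsto ε (nhdsWithin 0 (Set.Ioi 0)) (nhds 0) ∧
      ∀ t ∈ Set.Ioc 0 c, L t = η t * Real.exp (∫ r in t..c, ε r / r) := by
  constructor
  · -- forward direction
    intro hyp
    set h : ℝ → ℝ := fun x => Real.log (L (c * Real.exp (-x))) with hhdef
    have hm : Measurable h :=
      Real.measurable_log.comp (hLmeas.comp (measurable_const.mul
        (Real.measurable_exp.comp measurable_neg)))
    have hp : ∀ u : ℝ, Tendsto (fun x => h (x + u) - h x) atTop (nhds 0) := by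
      intro u
      set ξ : ℝ := Real.exp (-u) with hξdef
      have hξ : 0 < ξ := Real.exp_pos _
      have hT : Tendsto (fun x : ℝ => c * Real.exp (-x)) atTop (nhdsWithin 0 (Set.Ioi 0)) := by
        apply tendsto_nhdsWithin_of_tendsto_nhds_of_eventually_within
        · have h1 : Tendsto (fun x : ℝ => Real.exp (-x)) atTop (nhds 0) :=
            Real.tendsto_exp_atBot.comp tendsto_neg_atTop_atBot
          have := h1.const_mul c
          simpa using this
        · exact Eventually.of_forall fun x => Set.mem_Ioi.mpr (mul_pos hc (Real.exp_pos _))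
      have hlog : Tendsto (fun t => Real.log (L (ξ * t) / L t))
          (nhdsWithin 0 (Set.Ioi 0)) (nhds 0) := by
        have h1 := hyp ξ hξ
        have := ((Real.continuousAt_log one_ne_zero).tendsto).comp h1
        rw [Real.log_one] at this
        exact this
      have hev : ∀ᶠ t in nhdsWithin 0 (Set.Ioi 0),
          Real.log (L (ξ * t) / L t) = Real.log (L (ξ * t)) - Real.log (L t) := by
        have hmem : Set.Ioo (0:ℝ) (min c (c / ξ)) ∈ nhdsWithin 0 (Set.Ioi 0) :=
          Ioo_mem_nhdsGT_of_mem ⟨le_refl _, lt_min hc (by positivity)⟩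
        filter_upwards [hmem] with t ht
        have ht0 : 0 < t := ht.1
        have htc : t ≤ c := le_of_lt (lt_of_lt_of_le ht.2 (min_le_left _ _))
        have hξtc : ξ * t ≤ c := by
          have := lt_of_lt_of_le ht.2 (min_le_right _ _)
          rw [lt_div_iff₀ hξ] at this
          linarith [this]
        have hp1 := hLpos t ⟨ht0, htc⟩
        have hp2 := hLpos (ξ * t) ⟨by positivity, hξtc⟩
        exact Real.log_div hp2.ne' hp1.ne'
      have h2 : Tendsto (fun t => Real.log (L (ξ * t)) - Real.log (L t))
          (nhdsWithin 0 (Set.Ioi 0)) (nhds 0) := hlog.congr' hev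
      have hcomp := h2.comp hT
      apply hcomp.congr
      intro x
      simp only [Function.comp, hhdef]
      congr 2
      rw [hξdef, show (-(x+u)) = -u + -x by ring, Real.exp_add]
      ring
    obtain ⟨ρ, εt, C, hρm, hεtc, hρ0, hεt0, hrepev⟩ := log_representation h hm hp
    obtain ⟨X', hX'⟩ := eventually_atTop.mp hrepev
    set X : ℝ := max X' 0 with hXdef
    have hXrep : ∀ x ≥ X, h x = ρ x + C + ∫ t in (0:ℝ)..x, εt t :=
      fun x hx => hX' x ((le_max_left _ _).trans hx)
    -- the primitive of εt
    set Φ : ℝ → ℝ := fun y => ∫ s in (0:ℝ)..y, εt s with hΦdef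
    have hΦcont : Continuous Φ :=
      intervalIntegral.continuous_primitive (fun a b => hεtc.intervalIntegrable a b) 0
    set xt : ℝ → ℝ := fun t => Real.log c - Real.log t with hxtdef
    have hxtop : Tendsto xt (nhdsWithin 0 (Set.Ioi 0)) atTop := by
      have h1 : Tendsto (fun t : ℝ => -Real.log t) (nhdsWithin 0 (Set.Ioi 0)) atTop :=
        (tendsto_neg_atBot_atTop).comp Real.tendsto_log_nhdsGT_zero
      have := tendsto_atTop_add_const_left _ (Real.log c) h1
      apply this.congr
      intro t
      simp [hxtdef, sub_eq_add_neg]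
    refine ⟨fun t => if 0 < t then L t * Real.exp (-(Φ (xt t))) else 1,
      fun r => εt (xt r), Real.exp C, ?_, Real.exp_pos _, ?_, ?_, ?_, ?_⟩
    · -- measurability of η
      refine Measurable.ite measurableSet_Ioi ?_ measurable_const
      exact hLmeas.mul ((Real.measurable_exp.comp (measurable_neg.comp
        ((hΦcont.measurable).comp (measurable_const.sub Real.measurable_log)))))
    · -- limit of η
      have hev : ∀ᶠ t in nhdsWithin 0 (Set.Ioi 0),
          (if 0 < t then L t * Real.exp (-(Φ (xt t))) else 1) = Real.exp (ρ (xt t) + C) := by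
        filter_upwards [hxtop.eventually (eventually_ge_atTop X), self_mem_nhdsWithin]
          with t hxtX ht0'
        have ht0 : (0:ℝ) < t := ht0'
        have hxt0 : 0 ≤ xt t := le_trans (le_max_right _ _) hxtX
        have htc : t ≤ c := by
          have : Real.log t ≤ Real.log c := by
            have := hxt0; rw [hxtdef] at this; dsimp at this; linarith
          exact (Real.log_le_log_iff ht0 hc).mp this
        have hLt := hLpos t ⟨ht0, htc⟩
        have harg : c * Real.exp (-(xt t)) = t := by
          rw [hxtdef]
          dsimp only
          rw [neg_sub, Real.exp_sub, Real.exp_log ht0, Real.exp_log hc]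
          field_simp
        have hht : h (xt t) = Real.log (L t) := by rw [hhdef]; dsimp only; rw [harg]
        rw [if_pos ht0]
        have hrep := hXrep (xt t) hxtX
        rw [hht] at hrep
        have hLeq : L t = Real.exp (ρ (xt t) + C + Φ (xt t)) := by
          rw [← hrep, Real.exp_log hLt]
        rw [hLeq, ← Real.exp_add]
        congr 1
        ring
      have hlim : Tendsto (fun t => Real.exp (ρ (xt t) + C)) (nhdsWithin 0 (Set.Ioi 0))
          (nhds (Real.exp C)) := by
        have h1 : Tendsto (fun t => ρ (xt t) + C) (nhdsWithin 0 (Set.Ioi 0)) (nhds (0 + C)) :=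
          Tendsto.add_const C (hρ0.comp hxtop)
        rw [zero_add] at h1
        exact (Real.continuous_exp.tendsto _).comp h1
      exact Tendsto.congr' (EventuallyEq.symm hev) hlim
    · -- continuity of ε
      refine hεtc.comp_continuousOn ?_
      exact continuousOn_const.sub (Real.continuousOn_log.mono fun r hr => ne_of_gt hr.1)
    · -- limit of ε
      exact hεt0.comp hxtop
    · -- the representation formula
      intro t ht
      obtain ⟨ht0, htc⟩ := ht
      have hsubst : (∫ r in t..c, εt (xt r) / r) = Φ (xt t) := by
        have hpos : ∀ r ∈ Set.uIcc t c, (0:ℝ) < r := by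
          intro r hr
          rw [Set.uIcc_of_le htc] at hr
          exact lt_of_lt_of_le ht0 hr.1
        have hf : ∀ r ∈ Set.uIcc t c, HasDerivAt xt (-r⁻¹) r := by
          intro r hr
          have := (Real.hasDerivAt_log (hpos r hr).ne').const_sub (Real.log c)
          exact this
        have hf' : ContinuousOn (fun r : ℝ => -r⁻¹) (Set.uIcc t c) := by
          refine (ContinuousOn.neg ?_)
          exact ContinuousOn.inv₀ continuousOn_id (fun r hr => (hpos r hr).ne')
        have h1 := intervalIntegral.integral_comp_smul_deriv hf hf' hεtc
        have h2 : xt c = 0 := by rw [hxtdef]; simp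
        rw [h2] at h1
        have h3 : (∫ r in t..c, εt (xt r) / r) = -∫ r in t..c, (-r⁻¹) • εt (xt r) := by
          rw [← intervalIntegral.integral_neg]
          apply intervalIntegral.integral_congr
          intro r hr
          simp only [smul_eq_mul, neg_neg]
          rw [div_eq_inv_mul]
          ring
        simp only [Function.comp] at h1
        rw [h3, h1]
        simp only [hΦdef]
        rw [intervalIntegral.integral_symm 0 (xt t), neg_neg]
      show L t = (if 0 < t then L t * Real.exp (-(Φ (xt t))) else 1) *
        Real.exp (∫ r in t..c, εt (xt r) / r)
      rw [if_pos ht0, hsubst, mul_assoc, ← Real.exp_add, neg_add_cancel, Real.exp_zero, mul_one]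
  · -- reverse direction
    rintro ⟨η, ε, η₀, hηm, hη₀, hηlim, hεcont, hεlim, hrep⟩ ξ hξ
    have hξt : Tendsto (fun t => ξ * t) (nhdsWithin 0 (Set.Ioi 0))
        (nhdsWithin 0 (Set.Ioi 0)) := by
      apply tendsto_nhdsWithin_of_tendsto_nhds_of_eventually_within
      · have h1 : Tendsto (fun t : ℝ => ξ * t) (nhds 0) (nhds (ξ * 0)) :=
          (continuous_const.mul continuous_id).tendsto 0
        rw [mul_zero] at h1
        exact h1.mono_left nhdsWithin_le_nhds
      · filter_upwards [self_mem_nhdsWithin] with t ht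
        exact Set.mem_Ioi.mpr (mul_pos hξ ht)
    have hη1 : Tendsto (fun t => η (ξ * t) / η t) (nhdsWithin 0 (Set.Ioi 0)) (nhds 1) := by
      have := (hηlim.comp hξt).div hηlim hη₀.ne'
      rwa [div_self hη₀.ne'] at this
    -- integrability of ε r / r on subintervals of (0, c]
    have hInt : ∀ a b : ℝ, a ∈ Set.Ioc 0 c → b ∈ Set.Ioc 0 c →
        IntervalIntegrable (fun r => ε r / r) MeasureTheory.volume a b := by
      intro a b ha hb
      apply ContinuousOn.intervalIntegrable
      have hsub : Set.uIcc a b ⊆ Set.Ioc 0 c := Set.ordConnected_Ioc.uIcc_subset ha hb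
      exact (hεcont.mono hsub).div continuousOn_id (fun r hr => ne_of_gt (hsub hr).1)
    -- the integral from ξt to t tends to 0
    have hintlim : Tendsto (fun t => ∫ r in (ξ * t)..t, ε r / r)
        (nhdsWithin 0 (Set.Ioi 0)) (nhds 0) := by
      rw [NormedAddCommGroup.tendsto_nhds_zero]
      intro δ hδ
      set m : ℝ := min ξ 1 with hmdef
      have hm : 0 < m := lt_min hξ one_pos
      set M : ℝ := |1 - ξ| / m + 1 with hMdef
      have hM : 0 < M := by positivity
      set δ' : ℝ := δ / (2 * M) with hδ'def
      have hδ' : 0 < δ' := by positivity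
      have hev : ∀ᶠ r in nhdsWithin 0 (Set.Ioi 0), |ε r| ≤ δ' := by
        have := (NormedAddCommGroup.tendsto_nhds_zero.mp hεlim) δ' hδ'
        filter_upwards [this] with r hr
        exact le_of_lt (by simpa [Real.norm_eq_abs] using hr)
      obtain ⟨t₀, ht₀pos, ht₀⟩ : ∃ t₀ > 0, ∀ r ∈ Set.Ioo (0:ℝ) t₀, |ε r| ≤ δ' := by
        obtain ⟨u, hu, husub⟩ := mem_nhdsGT_iff_exists_Ioo_subset.mp hev
        exact ⟨u, hu, fun r hr => husub hr⟩
      have hmem : Set.Ioo (0:ℝ) (min t₀ (t₀ / ξ)) ∈ nhdsWithin 0 (Set.Ioi 0) :=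
        Ioo_mem_nhdsGT_of_mem ⟨le_refl _, lt_min ht₀pos (by positivity)⟩
      filter_upwards [hmem] with t ht
      obtain ⟨ht0, htlt⟩ := ht
      have htt₀ : t < t₀ := lt_of_lt_of_le htlt (min_le_left _ _)
      have hξtt₀ : ξ * t < t₀ := by
        have := lt_of_lt_of_le htlt (min_le_right _ _)
        rw [lt_div_iff₀ hξ] at this
        linarith
      have hbound : ∀ r ∈ Set.uIoc (ξ * t) t, ‖ε r / r‖ ≤ δ' / (m * t) := by
        intro r hr
        have hr1 : min (ξ * t) t < r := hr.1
        have hr2 : r ≤ max (ξ * t) t := hr.2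
        have hrlow : m * t < r := by
          rcases le_total (ξ * t) t with hcase | hcase
          · have : m * t ≤ ξ * t := by
              apply mul_le_mul_of_nonneg_right (min_le_left _ _) ht0.le
            calc m * t ≤ ξ * t := this
              _ = min (ξ * t) t := (min_eq_left hcase).symm
              _ < r := hr1
          · have : m * t ≤ 1 * t := mul_le_mul_of_nonneg_right (min_le_right _ _) ht0.le
            rw [one_mul] at this
            calc m * t ≤ t := this
              _ = min (ξ * t) t := (min_eq_right hcase).symm
              _ < r := hr1
        have hrpos : 0 < r := lt_trans (by positivity) hrlow
        have hrhigh : r < t₀ := lt_of_le_of_lt hr2 (by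
          rcases max_cases (ξ * t) t with ⟨heq, _⟩ | ⟨heq, _⟩ <;> rw [heq] <;> assumption)
        have hεr := ht₀ r ⟨hrpos, hrhigh⟩
        rw [Real.norm_eq_abs, abs_div]
        rw [abs_of_pos hrpos]
        exact div_le_div₀ hδ'.le hεr (mul_pos hm ht0) hrlow.le
      have := intervalIntegral.norm_integral_le_of_norm_le_const hbound
      have habs : |t - ξ * t| = |1 - ξ| * t := by
        rw [show t - ξ * t = (1 - ξ) * t by ring, abs_mul, abs_of_pos ht0]
      rw [habs] at this
      calc ‖∫ r in (ξ * t)..t, ε r / r‖ ≤ δ' / (m * t) * (|1 - ξ| * t) := this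
        _ = δ' * (|1 - ξ| / m) := by field_simp
        _ ≤ δ' * M := by
            apply mul_le_mul_of_nonneg_left _ hδ'.le
            rw [hMdef]; linarith
        _ = δ / (2 * M) * M := by rw [hδ'def]
        _ = δ / 2 := by field_simp
        _ < δ := by linarith
    have hexp : Tendsto (fun t => Real.exp (∫ r in (ξ * t)..t, ε r / r))
        (nhdsWithin 0 (Set.Ioi 0)) (nhds 1) := by
      have := (Real.continuous_exp.tendsto 0).comp hintlim
      rw [Real.exp_zero] at this
      exact this
    have hfinal := hη1.mul hexp
    rw [mul_one] at hfinal
    apply Tendsto.congr' _ hfinal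
    have hmem : Set.Ioo (0:ℝ) (min c (c / ξ)) ∈ nhdsWithin 0 (Set.Ioi 0) :=
      Ioo_mem_nhdsGT_of_mem ⟨le_refl _, lt_min hc (by positivity)⟩
    filter_upwards [hmem] with t ht
    obtain ⟨ht0, htlt⟩ := ht
    have htc : t ≤ c := le_of_lt (lt_of_lt_of_le htlt (min_le_left _ _))
    have hξtc : ξ * t ≤ c := by
      have := lt_of_lt_of_le htlt (min_le_right _ _)
      rw [lt_div_iff₀ hξ] at this
      linarith
    have htmem : t ∈ Set.Ioc 0 c := ⟨ht0, htc⟩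
    have hξtmem : ξ * t ∈ Set.Ioc 0 c := ⟨mul_pos hξ ht0, hξtc⟩
    have hL1 := hrep t htmem
    have hL2 := hrep (ξ * t) hξtmem
    have hηt : 0 < η t := by
      have hLt := hLpos t htmem
      rw [hL1] at hLt
      rcases mul_pos_iff.mp hLt with ⟨h1, _⟩ | ⟨_, h2⟩
      · exact h1
      · exact absurd h2 (not_lt.mpr (Real.exp_pos _).le)
    have hadd : (∫ r in (ξ * t)..t, ε r / r) + (∫ r in t..c, ε r / r)
        = ∫ r in (ξ * t)..c, ε r / r :=
      intervalIntegral.integral_add_adjacent_intervals (hInt _ _ hξtmem htmem)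
        (hInt _ _ htmem (Set.right_mem_Ioc.mpr hc))
    show η (ξ * t) / η t * Real.exp (∫ r in (ξ * t)..t, ε r / r) = L (ξ * t) / L t
    rw [hL1, hL2, ← hadd, Real.exp_add]
    field_simp
end

section
/- (Karamata's Theorem at 0, direct part) Let f be regularly varying at 0 with index ρ and locally bounded on (0,c]. If j > -(ρ+1), then lim_{t→0⁺} t^{j+1} f(t) / ∫₀^t r^j f(r) dr = j + ρ + 1; in particular the integral ∫₀^t r^j f(r) dr is finite for small t > 0. -/
open Filter Set MeasureTheory

lemma karamata_uct (h : ℝ → ℝ) (hmeas : Measurable h)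
    (hlim : ∀ u : ℝ, 0 ≤ u → Tendsto (fun x => h (x + u) - h x) atTop (nhds 0))
    {ε : ℝ} (hε : 0 < ε) :
    ∃ X : ℝ, ∀ x ≥ X, ∀ u ∈ Icc (0:ℝ) 1, |h (x + u) - h x| ≤ ε := by
  by_contra hcon
  push_neg at hcon
  choose x hx u hu hgt using fun n : ℕ => hcon n
  have hxtop : Tendsto x atTop atTop :=
    tendsto_atTop_mono hx tendsto_natCast_atTop_atTop
  have hxutop : Tendsto (fun n => x n + u n) atTop atTop :=
    tendsto_atTop_mono (fun n => le_trans (hx n) (le_add_of_nonneg_right (hu n).1))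
      tendsto_natCast_atTop_atTop
  set F : ℕ → ℝ → ℝ := fun n v => h (x n + v) - h (x n) with hF
  set G : ℕ → ℝ → ℝ := fun n v => h (x n + u n + v) - h (x n + u n) with hG
  have hFmeas : ∀ n, StronglyMeasurable (F n) := fun n =>
    ((hmeas.comp (measurable_const.add measurable_id)).sub measurable_const).stronglyMeasurable
  have hGmeas : ∀ n, StronglyMeasurable (G n) := fun n =>
    ((hmeas.comp (measurable_const.add measurable_id)).sub measurable_const).stronglyMeasurable
  have hvol : volume (Icc (0:ℝ) 2) ≠ ⊤ := by
    rw [Real.volume_Icc]; exact ENNReal.ofReal_ne_top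
  have hFae : ∀ᵐ v ∂volume, v ∈ Icc (0:ℝ) 2 →
      Tendsto (fun n => F n v) atTop (nhds ((fun _ : ℝ => (0:ℝ)) v)) :=
    ae_of_all _ fun v hv => (hlim v hv.1).comp hxtop
  have hGae : ∀ᵐ v ∂volume, v ∈ Icc (0:ℝ) 2 →
      Tendsto (fun n => G n v) atTop (nhds ((fun _ : ℝ => (0:ℝ)) v)) :=
    ae_of_all _ fun v hv => (hlim v hv.1).comp hxutop
  obtain ⟨t₁, ht₁s, ht₁m, ht₁μ, hu₁⟩ :=
    MeasureTheory.tendstoUniformlyOn_of_ae_tendsto hFmeas stronglyMeasurable_const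
      measurableSet_Icc hvol hFae (by norm_num : (0:ℝ) < 1/4)
  obtain ⟨t₂, ht₂s, ht₂m, ht₂μ, hu₂⟩ :=
    MeasureTheory.tendstoUniformlyOn_of_ae_tendsto hGmeas stronglyMeasurable_const
      measurableSet_Icc hvol hGae (by norm_num : (0:ℝ) < 1/4)
  set S₁ : Set ℝ := Icc 0 2 \ t₁ with hS₁
  set S₂ : Set ℝ := Icc 0 2 \ t₂ with hS₂
  have hS₁m : MeasurableSet S₁ := measurableSet_Icc.diff ht₁m
  have hS₂m : MeasurableSet S₂ := measurableSet_Icc.diff ht₂m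
  have hμS₁ : ENNReal.ofReal (7/4) ≤ volume S₁ := by
    have h1 : volume (Icc (0:ℝ) 2) - volume t₁ ≤ volume S₁ := le_measure_diff
    have h2 : ENNReal.ofReal (7/4) ≤ volume (Icc (0:ℝ) 2) - volume t₁ := by
      rw [Real.volume_Icc]
      calc ENNReal.ofReal (7/4) = ENNReal.ofReal (2 - 0) - ENNReal.ofReal (1/4) := by
            rw [← ENNReal.ofReal_sub _ (by norm_num)]; norm_num
        _ ≤ ENNReal.ofReal (2 - 0) - volume t₁ := tsub_le_tsub_left ht₁μ _
    exact h2.trans h1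
  have hμS₂ : ENNReal.ofReal (7/4) ≤ volume S₂ := by
    have h1 : volume (Icc (0:ℝ) 2) - volume t₂ ≤ volume S₂ := le_measure_diff
    have h2 : ENNReal.ofReal (7/4) ≤ volume (Icc (0:ℝ) 2) - volume t₂ := by
      rw [Real.volume_Icc]
      calc ENNReal.ofReal (7/4) = ENNReal.ofReal (2 - 0) - ENNReal.ofReal (1/4) := by
            rw [← ENNReal.ofReal_sub _ (by norm_num)]; norm_num
        _ ≤ ENNReal.ofReal (2 - 0) - volume t₂ := tsub_le_tsub_left ht₂μ _
    exact h2.trans h1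
  -- extract uniform smallness
  have h1' := (Metric.tendstoUniformlyOn_iff.mp hu₁) (ε/2) (half_pos hε)
  have h2' := (Metric.tendstoUniformlyOn_iff.mp hu₂) (ε/2) (half_pos hε)
  obtain ⟨n, hn1, hn2⟩ := (h1'.and h2').exists
  -- the translated set
  set B : Set ℝ := (fun v => -u n + v) ⁻¹' S₂ with hB
  have hBm : MeasurableSet B := hS₂m.preimage (measurable_const_add _)
  have hμB : volume B = volume S₂ := measure_preimage_add volume (-u n) S₂
  have hsub : S₁ ∪ B ⊆ Icc (0:ℝ) 3 := by
    rintro v (hv | hv)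
    · exact ⟨hv.1.1, hv.1.2.trans (by norm_num)⟩
    · have hv2 : -u n + v ∈ Icc (0:ℝ) 2 := hv.1
      constructor
      · nlinarith [hv2.1, (hu n).1]
      · nlinarith [hv2.2, (hu n).2]
  have hne : (S₁ ∩ B).Nonempty := by
    by_contra hemp
    rw [Set.not_nonempty_iff_eq_empty] at hemp
    have hdisj : Disjoint S₁ B := Set.disjoint_iff_inter_eq_empty.mpr hemp
    have hum : volume (S₁ ∪ B) = volume S₁ + volume B := measure_union hdisj hBm
    have hle : volume (S₁ ∪ B) ≤ ENNReal.ofReal 3 := by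
      calc volume (S₁ ∪ B) ≤ volume (Icc (0:ℝ) 3) := measure_mono hsub
        _ = ENNReal.ofReal 3 := by rw [Real.volume_Icc]; norm_num
    have hge : ENNReal.ofReal (7/2) ≤ volume (S₁ ∪ B) := by
      rw [hum, hμB]
      calc ENNReal.ofReal (7/2) = ENNReal.ofReal (7/4) + ENNReal.ofReal (7/4) := by
            rw [← ENNReal.ofReal_add (by norm_num) (by norm_num)]; norm_num
        _ ≤ volume S₁ + volume S₂ := add_le_add hμS₁ hμS₂
    have : ENNReal.ofReal (7/2) ≤ ENNReal.ofReal 3 := hge.trans hle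
    rw [ENNReal.ofReal_le_ofReal_iff (by norm_num)] at this
    norm_num at this
  obtain ⟨v, hvS₁, hvB⟩ := hne
  have e1 : |h (x n + v) - h (x n)| < ε/2 := by
    have := hn1 v hvS₁
    rwa [Real.dist_eq, abs_sub_comm, sub_zero] at this
  have e2 : |h (x n + v) - h (x n + u n)| < ε/2 := by
    have h2 := hn2 (-u n + v) hvB
    rw [Real.dist_eq, abs_sub_comm, sub_zero] at h2
    simp only [hG] at h2
    have harg : x n + u n + (-u n + v) = x n + v := by ring
    rwa [harg] at h2
  have htri : |h (x n + u n) - h (x n)| ≤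
      |h (x n + u n) - h (x n + v)| + |h (x n + v) - h (x n)| := abs_sub_le _ _ _
  have e2' : |h (x n + u n) - h (x n + v)| = |h (x n + v) - h (x n + u n)| := abs_sub_comm _ _
  have := hgt n
  linarith

lemma karamata_potter (h : ℝ → ℝ) (hmeas : Measurable h)
    (hlim : ∀ u : ℝ, 0 ≤ u → Tendsto (fun x => h (x + u) - h x) atTop (nhds 0))
    {ε : ℝ} (hε : 0 < ε) :
    ∃ X : ℝ, ∀ x ≥ X, ∀ u : ℝ, 0 ≤ u → |h (x + u) - h x| ≤ ε * (u + 1) := by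
  obtain ⟨X, hX⟩ := karamata_uct h hmeas hlim hε
  have key : ∀ n : ℕ, ∀ x ≥ X, ∀ u ∈ Icc (0:ℝ) 1,
      |h (x + n + u) - h x| ≤ ε * (n + 1) := by
    intro n
    induction n with
    | zero =>
      intro x hx u hu
      have := hX x hx u hu
      simpa using this
    | succ n ih =>
      intro x hx u hu
      have h1 := ih (x + 1) (by linarith) u hu
      have h2 := hX x hx 1 ⟨zero_le_one, le_refl 1⟩
      have harg : x + 1 + n + u = x + (n+1:ℕ) + u := by push_cast; ring
      rw [harg] at h1
      have htri : |h (x + (n+1:ℕ) + u) - h x| ≤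
          |h (x + (n+1:ℕ) + u) - h (x + 1)| + |h (x + 1) - h x| := abs_sub_le _ _ _
      push_cast at h1 htri ⊢
      linarith
  refine ⟨X, ?_⟩
  intro x hx u hu0
  set n := ⌊u⌋₊ with hn
  have h1 : (n:ℝ) ≤ u := Nat.floor_le hu0
  have h2 : u < n + 1 := Nat.lt_floor_add_one u
  have h3 := key n x hx (u - n) ⟨by linarith, by linarith⟩
  have e : x + n + (u - n) = x + u := by ring
  rw [e] at h3
  have : ε * ((n:ℝ) + 1) ≤ ε * (u + 1) := by nlinarith
  linarith


/-- Karamata's theorem at `0`, direct part, for `j > -(ρ+1)`. -/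
theorem karamata_at_zero
    (c ρ j : ℝ) (hc : 0 < c) (f : ℝ → ℝ) (hfmeas : Measurable f)
    (hfpos : ∀ t ∈ Set.Ioc 0 c, 0 < f t)
    (hRV : ∀ ξ : ℝ, 0 < ξ →
        Tendsto (fun t => f (ξ * t) / f t) (nhdsWithin 0 (Set.Ioi 0)) (nhds (ξ ^ ρ)))
    (hlocbdd : ∀ a ∈ Set.Ioo 0 c, ∃ M : ℝ, ∀ t ∈ Set.Icc a c, f t ≤ M)
    (hj : j > -(ρ + 1)) :
    (∀ t ∈ Set.Ioc 0 c, IntegrableOn (fun r => r ^ j * f r) (Set.Ioc 0 t)) ∧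
    Tendsto (fun t => t ^ (j + 1) * f t / ∫ r in Set.Ioc 0 t, r ^ j * f r)
      (nhdsWithin 0 (Set.Ioi 0)) (nhds (j + ρ + 1)) := by
  have hj' : 0 < j + ρ + 1 := by linarith
  set ε : ℝ := (j + ρ + 1) / 2 with hεdef
  have hε : 0 < ε := by positivity
  have hexp : (-1:ℝ) < j + (ρ - ε) := by rw [hεdef]; linarith
  -- the additive function h
  set h : ℝ → ℝ := fun x => Real.log (f (Real.exp (-x))) + ρ * x with hdef
  have hmeas : Measurable h :=
    (Real.measurable_log.comp (hfmeas.comp (Real.measurable_exp.comp measurable_neg))).add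
      (measurable_const.mul measurable_id)
  have hlim : ∀ u : ℝ, 0 ≤ u → Tendsto (fun x => h (x + u) - h x) atTop (nhds 0) := by
    intro u hu
    have hξ : (0:ℝ) < Real.exp (-u) := Real.exp_pos _
    have he : Tendsto (fun x : ℝ => Real.exp (-x)) atTop (nhdsWithin 0 (Set.Ioi 0)) := by
      refine tendsto_nhdsWithin_of_tendsto_nhds_of_eventually_within _
        Real.tendsto_exp_neg_atTop_nhds_zero ?_
      exact Eventually.of_forall fun x => Real.exp_pos _
    have h2 : Tendsto (fun x : ℝ => f (Real.exp (-u) * Real.exp (-x)) / f (Real.exp (-x)))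
        atTop (nhds (Real.exp (-u) ^ ρ)) := (hRV _ hξ).comp he
    have h3 := ((Real.continuousAt_log (ne_of_gt (Real.rpow_pos_of_pos hξ ρ))).tendsto).comp h2
    have hlog : Real.log (Real.exp (-u) ^ ρ) = ρ * (-u) := by
      rw [Real.log_rpow hξ, Real.log_exp]
    rw [hlog] at h3
    have h4 : Tendsto (fun x : ℝ =>
        Real.log (f (Real.exp (-u) * Real.exp (-x)) / f (Real.exp (-x))) + ρ * u)
        atTop (nhds 0) := by
      have := h3.add (tendsto_const_nhds (x := ρ * u) (f := atTop))
      simpa using this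
    refine Tendsto.congr' ?_ h4
    filter_upwards [eventually_ge_atTop (-Real.log c)] with x hxc
    have hx1 : Real.exp (-x) ∈ Set.Ioc (0:ℝ) c := by
      refine ⟨Real.exp_pos _, ?_⟩
      rw [← Real.exp_log hc]
      exact Real.exp_le_exp.mpr (by linarith)
    have hx2 : Real.exp (-(x+u)) ∈ Set.Ioc (0:ℝ) c :=
      ⟨Real.exp_pos _, le_trans (Real.exp_le_exp.mpr (by linarith)) hx1.2⟩
    have hmul : Real.exp (-(x+u)) = Real.exp (-u) * Real.exp (-x) := by
      rw [← Real.exp_add]; ring_nf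
    show Real.log (f (Real.exp (-u) * Real.exp (-x)) / f (Real.exp (-x))) + ρ * u
        = h (x + u) - h x
    rw [← hmul, Real.log_div (ne_of_gt (hfpos _ hx2)) (ne_of_gt (hfpos _ hx1))]
    simp only [hdef]
    ring
  obtain ⟨X, hX⟩ := karamata_potter h hmeas hlim hε
  set T : ℝ := min c (Real.exp (-X)) with hTdef
  have hT0 : 0 < T := lt_min hc (Real.exp_pos _)
  have hTc : T ≤ c := min_le_left _ _
  have hpot : ∀ t ∈ Set.Ioc (0:ℝ) T, ∀ s ∈ Set.Ioc (0:ℝ) 1,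
      f (s * t) ≤ Real.exp ε * s ^ (ρ - ε) * f t := by
    intro t ht s hs
    set x := -Real.log t with hxdef
    set u := -Real.log s with hudef
    have hxX : x ≥ X := by
      have h1 : t ≤ Real.exp (-X) := le_trans ht.2 (min_le_right _ _)
      have h2 := Real.log_le_log ht.1 h1
      rw [Real.log_exp] at h2
      rw [hxdef]; linarith
    have hu0 : 0 ≤ u := by
      have := Real.log_nonpos hs.1.le hs.2
      rw [hudef]; linarith
    have hext : Real.exp (-x) = t := by rw [hxdef, neg_neg, Real.exp_log ht.1]
    have hexs : Real.exp (-u) = s := by rw [hudef, neg_neg, Real.exp_log hs.1]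
    have hexsu : Real.exp (-(x + u)) = s * t := by
      rw [neg_add, Real.exp_add, hext, hexs]; ring
    have hst : s * t ∈ Set.Ioc (0:ℝ) c :=
      ⟨mul_pos hs.1 ht.1, le_trans (mul_le_of_le_one_left ht.1.le hs.2) (ht.2.trans hTc)⟩
    have hfst : 0 < f (s*t) := hfpos _ hst
    have hft : 0 < f t := hfpos _ ⟨ht.1, ht.2.trans hTc⟩
    have hkey := hX x hxX u hu0
    have habs : h (x + u) - h x = Real.log (f (s*t)) - Real.log (f t) + ρ * u := by
      simp only [hdef]
      rw [hexsu, hext]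
      ring
    have h5 : Real.log (f (s*t)) ≤ Real.log (f t) + ε * (u + 1) - ρ * u := by
      have h6 := (abs_le.mp hkey).2
      rw [habs] at h6
      linarith
    have hsr : s ^ (ρ - ε) = Real.exp ((ε - ρ) * u) := by
      rw [Real.rpow_def_of_pos hs.1]
      congr 1
      have hls : Real.log s = -u := by rw [hudef]; ring
      rw [hls]; ring
    calc f (s*t) = Real.exp (Real.log (f (s*t))) := (Real.exp_log hfst).symm
      _ ≤ Real.exp (Real.log (f t) + ε * (u+1) - ρ * u) := Real.exp_le_exp.mpr h5
      _ = Real.exp ε * Real.exp ((ε - ρ) * u) * Real.exp (Real.log (f t)) := by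
          rw [← Real.exp_add, ← Real.exp_add]; congr 1; ring
      _ = Real.exp ε * s ^ (ρ - ε) * f t := by rw [hsr, Real.exp_log hft]
  -- local boundedness point
  set a : ℝ := min T (c/2) with hadef
  have ha0 : 0 < a := lt_min hT0 (by linarith)
  have hac : a < c := lt_of_le_of_lt (min_le_right _ _) (by linarith)
  have haT : a ≤ T := min_le_left _ _
  obtain ⟨M, hM⟩ := hlocbdd a ⟨ha0, hac⟩
  have hrpow_meas : ∀ q : ℝ, Measurable fun y : ℝ => y ^ q := fun q =>
    measurable_of_continuousOn_compl_singleton 0 fun y hy =>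
      (Real.continuousAt_rpow_const y q (Or.inl (by simpa using hy))).continuousWithinAt
  have hgmeas : Measurable fun r : ℝ => r ^ j * f r := (hrpow_meas j).mul hfmeas
  -- integrability near 0
  have hbase : IntegrableOn (fun r : ℝ => r ^ j * f r) (Set.Ioc 0 a) := by
    have hfa : 0 < f a := hfpos a ⟨ha0, hac.le⟩
    set C : ℝ := Real.exp ε * f a / a ^ (ρ - ε) with hC
    have hbound_int : IntegrableOn (fun r : ℝ => C * r ^ (j + (ρ - ε))) (Set.Ioc 0 a) := by
      have h7 := intervalIntegral.intervalIntegrable_rpow' (a := 0) (b := a) hexp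
      rw [intervalIntegrable_iff_integrableOn_Ioc_of_le ha0.le] at h7
      exact h7.const_mul C
    refine Integrable.mono' hbound_int hgmeas.aestronglyMeasurable ?_
    rw [ae_restrict_iff' measurableSet_Ioc]
    refine ae_of_all _ fun r hr => ?_
    have hr0 : 0 < r := hr.1
    have hfr : 0 < f r := hfpos r ⟨hr0, hr.2.trans (haT.trans hTc)⟩
    rw [Real.norm_eq_abs, abs_of_pos (mul_pos (Real.rpow_pos_of_pos hr0 j) hfr)]
    have hp := hpot a ⟨ha0, haT⟩ (r / a) ⟨div_pos hr0 ha0, (div_le_one ha0).mpr hr.2⟩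
    rw [div_mul_cancel₀ _ (ne_of_gt ha0)] at hp
    have hsplit : (r / a) ^ (ρ - ε) = r ^ (ρ - ε) / a ^ (ρ - ε) :=
      Real.div_rpow hr0.le ha0.le _
    rw [hsplit] at hp
    have haε : 0 < a ^ (ρ - ε) := Real.rpow_pos_of_pos ha0 _
    calc r ^ j * f r ≤ r ^ j * (Real.exp ε * (r ^ (ρ - ε) / a ^ (ρ - ε)) * f a) :=
          mul_le_mul_of_nonneg_left hp (Real.rpow_nonneg hr0.le j)
      _ = C * r ^ (j + (ρ - ε)) := by
          rw [Real.rpow_add hr0, hC]; field_simp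
  -- integrability away from 0
  have htail : IntegrableOn (fun r : ℝ => r ^ j * f r) (Set.Ioc a c) := by
    refine ⟨hgmeas.aestronglyMeasurable.restrict, ?_⟩
    refine HasFiniteIntegral.restrict_of_bounded
      (C := max (a ^ j) (c ^ j) * max M 0) ?_ ?_
    · rw [Real.volume_Ioc]; exact ENNReal.ofReal_lt_top
    · rw [ae_restrict_iff' measurableSet_Ioc]
      refine ae_of_all _ fun r hr => ?_
      have hr0 : 0 < r := ha0.trans hr.1
      have hfr : 0 < f r := hfpos r ⟨hr0, hr.2⟩
      have hfM : f r ≤ max M 0 := le_trans (hM r ⟨hr.1.le, hr.2⟩) (le_max_left _ _)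
      have hrj : r ^ j ≤ max (a ^ j) (c ^ j) := by
        rcases le_or_gt 0 j with hj0 | hj0
        · exact le_trans (Real.rpow_le_rpow hr0.le hr.2 hj0) (le_max_right _ _)
        · exact le_trans (Real.rpow_le_rpow_of_nonpos ha0 hr.1.le hj0.le) (le_max_left _ _)
      rw [Real.norm_eq_abs, abs_of_pos (mul_pos (Real.rpow_pos_of_pos hr0 j) hfr)]
      exact mul_le_mul hrj hfM hfr.le
        (le_trans (Real.rpow_nonneg ha0.le j) (le_max_left _ _))
  have hIntOn : ∀ t ∈ Set.Ioc (0:ℝ) c, IntegrableOn (fun r => r ^ j * f r) (Set.Ioc 0 t) := by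
    intro t ht
    refine (hbase.union htail).mono_set ?_
    intro r hr
    rcases le_or_gt r a with h8 | h8
    · exact Or.inl ⟨hr.1, h8⟩
    · exact Or.inr ⟨h8, hr.2.trans ht.2⟩
  refine ⟨hIntOn, ?_⟩
  -- convergence of the normalized integral
  have hψlim : Tendsto (fun t => ∫ s in Set.Ioc (0:ℝ) 1, s ^ j * (f (s * t) / f t))
      (nhdsWithin 0 (Set.Ioi 0)) (nhds (1 / (j + ρ + 1))) := by
    have hlimint : (∫ s in Set.Ioc (0:ℝ) 1, s ^ (j + ρ)) = 1 / (j + ρ + 1) := by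
      rw [← intervalIntegral.integral_of_le zero_le_one,
        integral_rpow (Or.inl (by linarith : (-1:ℝ) < j + ρ)),
        Real.one_rpow, Real.zero_rpow (by linarith : j + ρ + 1 ≠ 0)]
      norm_num
    rw [← hlimint]
    refine tendsto_integral_filter_of_dominated_convergence
      (fun s => Real.exp ε * s ^ (j + (ρ - ε))) ?_ ?_ ?_ ?_
    · refine Eventually.of_forall fun t => ?_
      exact (((hrpow_meas j).mul ((hfmeas.comp (measurable_mul_const t)).div_const
        (f t)))).aestronglyMeasurable
    · filter_upwards [Ioc_mem_nhdsGT_of_mem (⟨le_refl 0, ha0⟩ : (0:ℝ) ∈ Set.Ico 0 a)]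
        with t ht
      rw [ae_restrict_iff' measurableSet_Ioc]
      refine ae_of_all _ fun s hs => ?_
      have hs0 : 0 < s := hs.1
      have hst : s * t ∈ Set.Ioc (0:ℝ) c :=
        ⟨mul_pos hs0 ht.1, le_trans (mul_le_of_le_one_left ht.1.le hs.2)
          (ht.2.trans (haT.trans hTc))⟩
      have hft : 0 < f t := hfpos t ⟨ht.1, ht.2.trans (haT.trans hTc)⟩
      have hfst : 0 < f (s*t) := hfpos _ hst
      rw [Real.norm_eq_abs,
        abs_of_pos (mul_pos (Real.rpow_pos_of_pos hs0 j) (div_pos hfst hft))]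
      have hp := hpot t ⟨ht.1, ht.2.trans haT⟩ s hs
      have hdivle : f (s*t) / f t ≤ Real.exp ε * s ^ (ρ - ε) := by
        rw [div_le_iff₀ hft]; exact hp
      calc s ^ j * (f (s*t) / f t) ≤ s ^ j * (Real.exp ε * s ^ (ρ - ε)) :=
            mul_le_mul_of_nonneg_left hdivle (Real.rpow_nonneg hs0.le j)
        _ = Real.exp ε * s ^ (j + (ρ - ε)) := by rw [Real.rpow_add hs0]; ring
    · have h7 := intervalIntegral.intervalIntegrable_rpow' (a := 0) (b := 1) hexp
      rw [intervalIntegrable_iff_integrableOn_Ioc_of_le zero_le_one] at h7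
      exact h7.const_mul _
    · rw [ae_restrict_iff' measurableSet_Ioc]
      refine ae_of_all _ fun s hs => ?_
      have hs0 : 0 < s := hs.1
      have h9 := (hRV s hs0).const_mul (s ^ j)
      rw [Real.rpow_add hs0]
      exact h9
  -- the substitution identity
  have hId : ∀ t ∈ Set.Ioc (0:ℝ) a, (∫ r in Set.Ioc 0 t, r ^ j * f r) =
      t ^ (j + 1) * f t * ∫ s in Set.Ioc (0:ℝ) 1, s ^ j * (f (s * t) / f t) := by
    intro t ht
    have ht0 : 0 < t := ht.1
    have hft : 0 < f t := hfpos t ⟨ht0, ht.2.trans (haT.trans hTc)⟩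
    have step1 : (∫ s in (0:ℝ)..1, (t * s) ^ j * f (t * s))
        = t⁻¹ * ∫ r in (0:ℝ)..t, r ^ j * f r := by
      have h10 := intervalIntegral.integral_comp_mul_left
        (a := (0:ℝ)) (b := 1) (fun r => r ^ j * f r) (ne_of_gt ht0)
      rw [mul_zero, mul_one, smul_eq_mul] at h10
      exact h10
    have step2 : (∫ s in (0:ℝ)..1, (t * s) ^ j * f (t * s))
        = (t ^ j * f t) * ∫ s in Set.Ioc (0:ℝ) 1, s ^ j * (f (s * t) / f t) := by
      rw [intervalIntegral.integral_of_le zero_le_one]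
      rw [← MeasureTheory.integral_const_mul]
      refine setIntegral_congr_fun measurableSet_Ioc fun s hs => ?_
      have hs0 : 0 < s := hs.1
      have hfst : 0 < f (s * t) := hfpos _
        ⟨mul_pos hs0 ht0, le_trans (mul_le_of_le_one_left ht0.le hs.2)
          (ht.2.trans (haT.trans hTc))⟩
      rw [mul_comm t s, Real.mul_rpow hs0.le ht0.le]
      field_simp
    rw [← intervalIntegral.integral_of_le ht0.le]
    have step3 : (∫ r in (0:ℝ)..t, r ^ j * f r)
        = t * ((t ^ j * f t) * ∫ s in Set.Ioc (0:ℝ) 1, s ^ j * (f (s * t) / f t)) := by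
      rw [← step2, step1]
      field_simp
    rw [step3, Real.rpow_add ht0, Real.rpow_one]
    ring
  -- conclude
  have hψpos : ∀ᶠ t in nhdsWithin (0:ℝ) (Set.Ioi 0),
      0 < ∫ s in Set.Ioc (0:ℝ) 1, s ^ j * (f (s * t) / f t) :=
    hψlim.eventually (eventually_gt_nhds (by positivity))
  have heq : (fun t => (∫ s in Set.Ioc (0:ℝ) 1, s ^ j * (f (s * t) / f t))⁻¹)
      =ᶠ[nhdsWithin (0:ℝ) (Set.Ioi 0)]
      (fun t => t ^ (j + 1) * f t / ∫ r in Set.Ioc 0 t, r ^ j * f r) := by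
    filter_upwards [Ioc_mem_nhdsGT_of_mem (⟨le_refl 0, ha0⟩ : (0:ℝ) ∈ Set.Ico 0 a), hψpos]
      with t ht hψt
    rw [hId t ht]
    have hA : t ^ (j+1) * f t ≠ 0 :=
      ne_of_gt (mul_pos (Real.rpow_pos_of_pos ht.1 (j+1))
        (hfpos t ⟨ht.1, ht.2.trans (haT.trans hTc)⟩))
    rw [div_mul_cancel_left₀ hA]
  have hinv : Tendsto (fun t => (∫ s in Set.Ioc (0:ℝ) 1, s ^ j * (f (s * t) / f t))⁻¹)
      (nhdsWithin (0:ℝ) (Set.Ioi 0)) (nhds ((1 / (j + ρ + 1))⁻¹)) :=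
    hψlim.inv₀ (one_div_ne_zero (ne_of_gt hj'))
  rw [one_div, inv_inv] at hinv
  exact Tendsto.congr' heq hinv
end

section
/- (Karamata's Theorem at ∞) Let f be regularly varying at ∞ with index ρ and locally bounded on [A,∞). If j < -(ρ+1), then ∫_t^∞ ξ^j f(ξ) dξ < ∞ for large t and lim_{t→∞} t^{j+1} f(t) / ∫_t^∞ ξ^j f(ξ) dξ = -(j + ρ + 1). -/
open Filter Set MeasureTheory Pointwise

private lemma karamata_bdd
    (A ρ : ℝ) (f : ℝ → ℝ) (hfmeas : Measurable f)
    (hfpos : ∀ t ∈ Set.Ici A, 0 < f t)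
    (hRV : ∀ ξ : ℝ, 0 < ξ →
        Tendsto (fun t => f (ξ * t) / f t) atTop (nhds (ξ ^ ρ))) :
    ∃ T K : ℝ, max A 1 ≤ T ∧ 0 < K ∧
      ∀ t, T ≤ t → ∀ r ∈ Set.Icc (1:ℝ) 2, f (r * t) ≤ K * f t := by
  by_contra hcon
  push_neg at hcon
  have h' : ∀ n : ℕ, ∃ t, (max A 1 + n ≤ t) ∧ ∃ r ∈ Set.Icc (1:ℝ) 2,
      ((n:ℝ)+1) * f t < f (r * t) := by
    intro n
    obtain ⟨t, ht, r, hr, hlt⟩ := hcon (max A 1 + n) ((n:ℝ)+1)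
      (le_add_of_nonneg_right n.cast_nonneg) (by positivity)
    exact ⟨t, ht, r, hr, hlt⟩
  choose t ht r hr hlt using h'
  -- basic facts
  have htA : ∀ n, A ≤ t n := fun n =>
    le_trans (le_max_left A 1) (le_trans (le_add_of_nonneg_right (Nat.cast_nonneg n)) (ht n))
  have ht1 : ∀ n, (1:ℝ) ≤ t n := fun n =>
    le_trans (le_max_right A 1) (le_trans (le_add_of_nonneg_right (Nat.cast_nonneg n)) (ht n))
  have httop : Tendsto t atTop atTop := by
    apply tendsto_atTop_mono (fun n => ?_) tendsto_natCast_atTop_atTop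
    calc (n:ℝ) ≤ max A 1 + n := le_add_of_nonneg_left (le_trans zero_le_one (le_max_right A 1))
      _ ≤ t n := ht n
  set u : ℕ → ℝ := fun n => r n * t n with hu_def
  have htu : ∀ n, t n ≤ u n := fun n =>
    le_mul_of_one_le_left (le_trans zero_le_one (ht1 n)) (hr n).1
  have hutop : Tendsto u atTop atTop := tendsto_atTop_mono htu httop
  have huA : ∀ n, A ≤ u n := fun n => le_trans (htA n) (htu n)
  have hft : ∀ n, 0 < f (t n) := fun n => hfpos _ (htA n)
  have hfu : ∀ n, 0 < f (u n) := fun n => hfpos _ (huA n)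
  -- the two function sequences
  set φ : ℕ → ℝ → ℝ := fun n v => f (v * t n) / f (t n) with hφ_def
  set χ : ℕ → ℝ → ℝ := fun n w => f (w * u n) / f (u n) with hχ_def
  set g : ℝ → ℝ := fun v => v ^ ρ with hg_def
  have hφm : ∀ n, StronglyMeasurable (φ n) := fun n =>
    ((hfmeas.comp (measurable_mul_const (t n))).div_const _).stronglyMeasurable
  have hχm : ∀ n, StronglyMeasurable (χ n) := fun n =>
    ((hfmeas.comp (measurable_mul_const (u n))).div_const _).stronglyMeasurable
  have hgm : StronglyMeasurable g := by
    simp only [hg_def]; exact Measurable.stronglyMeasurable (by fun_prop)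
  have hφlim : ∀ v ∈ Set.Icc (1:ℝ) 4, Tendsto (fun n => φ n v) atTop (nhds (g v)) :=
    fun v hv => (hRV v (lt_of_lt_of_le one_pos hv.1)).comp httop
  have hχlim : ∀ w ∈ Set.Icc (1:ℝ) 2, Tendsto (fun n => χ n w) atTop (nhds (g w)) :=
    fun w hw => (hRV w (lt_of_lt_of_le one_pos hw.1)).comp hutop
  -- Egorov twice
  obtain ⟨e₁, he₁s, he₁m, he₁μ, hU₁⟩ :=
    tendstoUniformlyOn_of_ae_tendsto (μ := volume) (s := Set.Icc (1:ℝ) 4) hφm hgm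
      measurableSet_Icc (by simp [Real.volume_Icc]) (ae_of_all _ hφlim)
      (by norm_num : (0:ℝ) < 1/4)
  obtain ⟨e₂, he₂s, he₂m, he₂μ, hU₂⟩ :=
    tendstoUniformlyOn_of_ae_tendsto (μ := volume) (s := Set.Icc (1:ℝ) 2) hχm hgm
      measurableSet_Icc (by simp [Real.volume_Icc]) (ae_of_all _ hχlim)
      (by norm_num : (0:ℝ) < 1/4)
  set S₁ : Set ℝ := Set.Icc 1 4 \ e₁ with hS₁_def
  set S₂ : Set ℝ := Set.Icc 1 2 \ e₂ with hS₂_def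
  have hS₁meas : MeasurableSet S₁ := measurableSet_Icc.diff he₁m
  have hS₂meas : MeasurableSet S₂ := measurableSet_Icc.diff he₂m
  have hvolS₁ : ENNReal.ofReal (11/4) ≤ volume S₁ := by
    rw [measure_diff he₁s he₁m.nullMeasurableSet (lt_of_le_of_lt he₁μ (by simp)).ne]
    rw [Real.volume_Icc]
    calc ENNReal.ofReal (11/4) = ENNReal.ofReal ((4:ℝ)-1) - ENNReal.ofReal (1/4) := by
          rw [← ENNReal.ofReal_sub] <;> norm_num
      _ ≤ ENNReal.ofReal ((4:ℝ)-1) - volume e₁ := tsub_le_tsub_left he₁μ _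
  have hvolS₂ : ENNReal.ofReal (3/4) ≤ volume S₂ := by
    rw [measure_diff he₂s he₂m.nullMeasurableSet (lt_of_le_of_lt he₂μ (by simp)).ne]
    rw [Real.volume_Icc]
    calc ENNReal.ofReal (3/4) = ENNReal.ofReal ((2:ℝ)-1) - ENNReal.ofReal (1/4) := by
          rw [← ENNReal.ofReal_sub] <;> norm_num
      _ ≤ ENNReal.ofReal ((2:ℝ)-1) - volume e₂ := tsub_le_tsub_left he₂μ _
  -- bounds for the limit function
  set m : ℝ := min 1 ((2:ℝ) ^ ρ) with hm_def
  have hm : 0 < m := lt_min one_pos (Real.rpow_pos_of_pos two_pos ρ)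
  set M : ℝ := max 1 ((4:ℝ) ^ ρ) + 1 with hM_def
  have hM : 0 < M := by positivity
  have hgub : ∀ v ∈ Set.Icc (1:ℝ) 4, g v ≤ M - 1 := by
    intro v hv
    simp only [hg_def, hM_def, add_sub_cancel_right]
    rcases le_or_gt 0 ρ with hρ | hρ
    · exact le_max_of_le_right (Real.rpow_le_rpow (by linarith [hv.1]) hv.2 hρ)
    · refine le_max_of_le_left ?_
      have := Real.rpow_le_rpow_of_nonpos one_pos hv.1 hρ.le
      simpa using this
  have hglb : ∀ w ∈ Set.Icc (1:ℝ) 2, m ≤ g w := by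
    intro w hw
    simp only [hg_def, hm_def]
    rcases le_or_gt 0 ρ with hρ | hρ
    · refine le_trans (min_le_left _ _) ?_
      have := Real.rpow_le_rpow (zero_le_one) hw.1 hρ
      simpa using this
    · exact le_trans (min_le_right _ _) (Real.rpow_le_rpow_of_nonpos (by linarith [hw.1]) hw.2 hρ.le)
  -- eventual uniform bounds
  rw [Metric.tendstoUniformlyOn_iff] at hU₁ hU₂
  have hE₁ : ∀ᶠ n in atTop, ∀ v ∈ S₁, φ n v < M := by
    filter_upwards [hU₁ 1 one_pos] with n hn v hv
    have hd := hn v hv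
    rw [Real.dist_eq, abs_lt] at hd
    have := hgub v hv.1
    linarith [hd.2]
  have hE₂ : ∀ᶠ n in atTop, ∀ w ∈ S₂, m / 2 < χ n w := by
    filter_upwards [hU₂ (m/2) (by linarith)] with n hn w hw
    have hd := hn w hw
    rw [Real.dist_eq, abs_lt] at hd
    have := hglb w hw.1
    linarith [hd.1]
  have hE₃ : ∀ᶠ n : ℕ in atTop, 2 * M / m ≤ (n:ℝ) :=
    tendsto_natCast_atTop_atTop.eventually_ge_atTop (2 * M / m)
  obtain ⟨n, h1, h2, h3⟩ := (hE₁.and (hE₂.and hE₃)).exists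
  obtain ⟨h2, h3⟩ := (⟨h2, h3⟩ : _ ∧ _)
  -- the scaled set and the nonempty intersection
  have hrn := hr n
  have hr0 : (0:ℝ) < r n := lt_of_lt_of_le one_pos hrn.1
  have hvolsm : ENNReal.ofReal (3/4) ≤ volume (r n • S₂) := by
    rw [Measure.addHaar_smul_of_nonneg volume hr0.le S₂]
    simp only [Module.finrank_self, pow_one]
    refine le_trans hvolS₂ (le_mul_of_one_le_left zero_le ?_)
    rw [ENNReal.one_le_ofReal]
    exact hrn.1
  have hsub : (r n • S₂) ∪ S₁ ⊆ Set.Icc (1:ℝ) 4 := by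
    rintro x (hx | hx)
    · obtain ⟨w, hw, rfl⟩ := hx
      have hw2 := hw.1
      simp only [smul_eq_mul]
      constructor
      · exact one_le_mul_of_one_le_of_one_le hrn.1 hw2.1
      · calc r n * w ≤ 2 * 2 := by
              apply mul_le_mul hrn.2 hw2.2 (by linarith [hw2.1]) (by norm_num)
          _ = 4 := by norm_num
    · exact hx.1
  have hne : (S₁ ∩ (r n • S₂)).Nonempty := by
    rw [Set.nonempty_iff_ne_empty]
    intro hempty
    have h0 : volume ((r n • S₂) ∩ S₁) = 0 := by
      rw [Set.inter_comm, hempty]; simp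
    have key := measure_union_add_inter (μ := volume) (r n • S₂) hS₁meas
    rw [h0, add_zero] at key
    have hub : volume ((r n • S₂) ∪ S₁) ≤ ENNReal.ofReal 3 := by
      refine le_trans (measure_mono hsub) ?_
      rw [Real.volume_Icc]; norm_num
    have hlb : ENNReal.ofReal (7/2) ≤ volume ((r n • S₂) ∪ S₁) := by
      rw [key]
      calc ENNReal.ofReal (7/2) = ENNReal.ofReal (3/4) + ENNReal.ofReal (11/4) := by
            rw [← ENNReal.ofReal_add] <;> norm_num
        _ ≤ _ := add_le_add hvolsm hvolS₁
    have := le_trans hlb hub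
    rw [ENNReal.ofReal_le_ofReal_iff (by norm_num)] at this
    norm_num at this
  obtain ⟨v, hvS₁, hvsm⟩ := hne
  obtain ⟨w, hwS₂, hvw⟩ := hvsm
  simp only [smul_eq_mul] at hvw
  -- final computation
  have hv1 : (1:ℝ) ≤ v := hvS₁.1.1
  have hvtA : A ≤ v * t n := le_trans (htA n) (le_mul_of_one_le_left (by linarith [ht1 n]) hv1)
  have hfvt : 0 < f (v * t n) := hfpos _ hvtA
  have hwu : w * u n = v * t n := by
    rw [hu_def]; simp only []
    rw [← hvw]; ring
  have hratio : φ n v / χ n w = f (u n) / f (t n) := by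
    have hne1 : f (v * t n) ≠ 0 := hfvt.ne'
    have hne2 : f (t n) ≠ 0 := (hft n).ne'
    have hne3 : f (u n) ≠ 0 := (hfu n).ne'
    simp only [hφ_def, hχ_def, hwu]
    field_simp
  have hφv : φ n v < M := h1 v hvS₁
  have hχw : m / 2 < χ n w := h2 w hwS₂
  have hφpos : 0 < φ n v := by
    simp only [hφ_def]; exact div_pos hfvt (hft n)
  have hub2 : f (u n) / f (t n) ≤ M / (m/2) := by
    rw [← hratio]
    exact div_le_div₀ hM.le hφv.le (by linarith) hχw.le
  have hlb2 : ((n:ℝ)+1) < f (u n) / f (t n) := by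
    rw [lt_div_iff₀ (hft n)]
    calc ((n:ℝ)+1) * f (t n) < f (r n * t n) := hlt n
      _ = f (u n) := by rw [hu_def]
  have hMm : M / (m/2) = 2 * M / m := by
    field_simp
  rw [hMm] at hub2
  linarith


private lemma karamata_potter_s3
    (A ρ : ℝ) (f : ℝ → ℝ) (hfmeas : Measurable f)
    (hfpos : ∀ t ∈ Set.Ici A, 0 < f t)
    (hRV : ∀ ξ : ℝ, 0 < ξ →
        Tendsto (fun t => f (ξ * t) / f t) atTop (nhds (ξ ^ ρ)))
    (p : ℝ) (hp : ρ < p) :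
    ∃ T C : ℝ, max A 1 ≤ T ∧ 0 < C ∧
      ∀ t, T ≤ t → ∀ s, 1 ≤ s → f (s * t) ≤ C * s ^ p * f t := by
  obtain ⟨T₀, K, hT₀, hK, hbdd⟩ := karamata_bdd A ρ f hfmeas hfpos hRV
  set q : ℝ := (2:ℝ) ^ p with hq_def
  have hq : 0 < q := Real.rpow_pos_of_pos two_pos p
  have h2ρq : (2:ℝ) ^ ρ < q := by
    rw [hq_def, Real.rpow_lt_rpow_left_iff one_lt_two]
    exact hp
  have hev : ∀ᶠ x in atTop, f (2 * x) / f x < q :=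
    (hRV 2 two_pos).eventually_lt_const h2ρq
  obtain ⟨T₁, hT₁⟩ := eventually_atTop.1 hev
  set T : ℝ := max T₀ T₁ with hT_def
  have hTA : max A 1 ≤ T := le_trans hT₀ (le_max_left _ _)
  have hT1 : (1:ℝ) ≤ T := le_trans (le_max_right A 1) hTA
  have hfposT : ∀ x, T ≤ x → 0 < f x := fun x hx =>
    hfpos x (le_trans (le_trans (le_max_left A 1) hTA) hx)
  have hdbl : ∀ x, T ≤ x → f (2 * x) ≤ q * f x := by
    intro x hx
    have h1 := hT₁ x (le_trans (le_max_right T₀ T₁) hx)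
    have h2 := hfposT x hx
    rw [div_lt_iff₀ h2] at h1
    linarith
  set C : ℝ := K * max 1 ((2:ℝ) ^ (-p)) with hC_def
  have hC : 0 < C := mul_pos hK (lt_of_lt_of_le one_pos (le_max_left _ _))
  have hKC : ∀ s : ℝ, 1 ≤ s → s ≤ 2 → K ≤ C * s ^ p := by
    intro s hs1 hs2
    have hkey : 1 ≤ max 1 ((2:ℝ) ^ (-p)) * s ^ p := by
      rcases le_or_gt 0 p with hp0 | hp0
      · have h1 : (1:ℝ) ≤ s ^ p := by
          rw [← Real.one_rpow p]
          exact Real.rpow_le_rpow zero_le_one hs1 hp0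
        exact one_le_mul_of_one_le_of_one_le (le_max_left _ _) h1
      · have h1 : (2:ℝ) ^ p ≤ s ^ p :=
          Real.rpow_le_rpow_of_nonpos (lt_of_lt_of_le one_pos hs1) hs2 hp0.le
        calc (1:ℝ) = (2:ℝ) ^ (-p) * (2:ℝ) ^ p := by
              rw [← Real.rpow_add two_pos]; simp
          _ ≤ max 1 ((2:ℝ) ^ (-p)) * s ^ p :=
              mul_le_mul (le_max_right _ _) h1 (Real.rpow_pos_of_pos two_pos p).le
                (le_trans zero_le_one (le_max_left _ _))
    calc K = K * 1 := (mul_one K).symm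
      _ ≤ K * (max 1 ((2:ℝ) ^ (-p)) * s ^ p) := by
          exact mul_le_mul_of_nonneg_left hkey hK.le
      _ = C * s ^ p := by rw [hC_def]; ring
  have hbase : ∀ s : ℝ, 1 ≤ s → s ≤ 2 → ∀ x, T ≤ x → f (s * x) ≤ C * s ^ p * f x := by
    intro s hs1 hs2 x hx
    calc f (s * x) ≤ K * f x := hbdd x (le_trans (le_max_left T₀ T₁) hx) s ⟨hs1, hs2⟩
      _ ≤ (C * s ^ p) * f x :=
        mul_le_mul_of_nonneg_right (hKC s hs1 hs2) (hfposT x hx).le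
  have hind : ∀ n : ℕ, ∀ s : ℝ, 1 ≤ s → s ≤ 2 ^ n → ∀ x, T ≤ x →
      f (s * x) ≤ C * s ^ p * f x := by
    intro n
    induction n with
    | zero =>
      intro s hs1 hs2 x hx
      exact hbase s hs1 (by norm_num at hs2; linarith) x hx
    | succ n ih =>
      intro s hs1 hs2 x hx
      rcases le_or_gt s 2 with h | h
      · exact hbase s hs1 h x hx
      · have hx0 : (0:ℝ) < x := lt_of_lt_of_le (lt_of_lt_of_le one_pos hT1) hx
        have hs1' : (1:ℝ) ≤ s / 2 := by linarith
        have hs2' : s / 2 ≤ 2 ^ n := by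
          rw [div_le_iff₀ (by norm_num : (0:ℝ) < 2)]
          calc s ≤ 2 ^ (n+1) := hs2
            _ = 2 ^ n * 2 := by ring
        have hx2 : T ≤ 2 * x := by linarith [hx]
        have h2p : (2:ℝ) ^ p ≠ 0 := (Real.rpow_pos_of_pos two_pos p).ne'
        have halg : C * (s/2) ^ p * (q * f x) = C * s ^ p * f x := by
          rw [Real.div_rpow (by linarith : (0:ℝ) ≤ s) (by norm_num : (0:ℝ) ≤ 2), hq_def]
          field_simp
        calc f (s * x) = f ((s/2) * (2*x)) := by rw [show (s/2) * (2*x) = s * x by ring]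
          _ ≤ C * (s/2) ^ p * f (2*x) := ih (s/2) hs1' hs2' (2*x) hx2
          _ ≤ C * (s/2) ^ p * (q * f x) := by
              refine mul_le_mul_of_nonneg_left (hdbl x hx) ?_
              have := Real.rpow_nonneg (by linarith : (0:ℝ) ≤ s/2) p
              positivity
          _ = C * s ^ p * f x := halg
  refine ⟨T, C, hTA, hC, fun t ht s hs => ?_⟩
  obtain ⟨n, hn⟩ := pow_unbounded_of_one_lt s one_lt_two
  exact hind n s hs hn.le t ht

/-- Karamata's theorem at `∞` for `j < -(ρ+1)`. -/
theorem karamata_at_infty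
    (A ρ j : ℝ) (f : ℝ → ℝ) (hfmeas : Measurable f)
    (hfpos : ∀ t ∈ Set.Ici A, 0 < f t)
    (hRV : ∀ ξ : ℝ, 0 < ξ →
        Tendsto (fun t => f (ξ * t) / f t) atTop (nhds (ξ ^ ρ)))
    (hlocbdd : ∀ b ∈ Set.Ici A, ∃ M : ℝ, ∀ t ∈ Set.Icc A b, f t ≤ M)
    (hj : j < -(ρ + 1)) :
    (∀ᶠ t in atTop, IntegrableOn (fun ξ => ξ ^ j * f ξ) (Set.Ioi t)) ∧
    Tendsto (fun t => t ^ (j + 1) * f t / ∫ ξ in Set.Ioi t, ξ ^ j * f ξ)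
      atTop (nhds (-(j + ρ + 1))) := by
  have hδpos : (0:ℝ) < -(j + ρ + 1) := by linarith
  set p : ℝ := ρ - (j + ρ + 1)/2 with hp_def
  have hρp : ρ < p := by rw [hp_def]; linarith
  have hjp : j + p < -1 := by rw [hp_def]; linarith
  obtain ⟨T, C, hTA, hC, hpot⟩ := karamata_potter_s3 A ρ f hfmeas hfpos hRV p hρp
  have hT1 : (1:ℝ) ≤ T := le_trans (le_max_right A 1) hTA
  have hTApos : A ≤ T := le_trans (le_max_left A 1) hTA
  have hfposT : ∀ x, T ≤ x → 0 < f x := fun x hx => hfpos x (le_trans hTApos hx)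
  -- Part 1: integrability
  have hInt : ∀ t, T ≤ t → IntegrableOn (fun ξ => ξ ^ j * f ξ) (Set.Ioi t) := by
    intro t ht
    have ht0 : (0:ℝ) < t := lt_of_lt_of_le one_pos (le_trans hT1 ht)
    have hb : IntegrableOn (fun ξ : ℝ => (C * f t * t ^ (-p)) * ξ ^ (j+p)) (Set.Ioi t) :=
      (integrableOn_Ioi_rpow_of_lt hjp ht0).const_mul _
    refine hb.mono' ?_ ?_
    · exact (Measurable.aestronglyMeasurable (by fun_prop))
    · rw [ae_restrict_iff' measurableSet_Ioi]
      refine ae_of_all _ fun ξ hξ => ?_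
      have hξt : t < ξ := hξ
      have hξ0 : (0:ℝ) < ξ := lt_trans ht0 hξt
      have hfξ : 0 < f ξ := hfpos ξ (le_trans hTApos (le_trans ht hξt.le))
      have key : f ξ ≤ C * (ξ/t) ^ p * f t := by
        have h := hpot t ht (ξ/t) (by rw [le_div_iff₀ ht0]; linarith)
        rwa [div_mul_cancel₀ _ ht0.ne'] at h
      have hnorm : ‖ξ ^ j * f ξ‖ = ξ ^ j * f ξ := by
        rw [Real.norm_eq_abs, abs_of_nonneg]
        exact mul_nonneg (Real.rpow_nonneg hξ0.le j) hfξ.le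
      rw [hnorm]
      calc ξ ^ j * f ξ ≤ ξ ^ j * (C * (ξ/t) ^ p * f t) :=
            mul_le_mul_of_nonneg_left key (Real.rpow_nonneg hξ0.le j)
        _ = (C * f t * t ^ (-p)) * ξ ^ (j+p) := by
            rw [Real.rpow_add hξ0, Real.div_rpow hξ0.le ht0.le, Real.rpow_neg ht0.le]
            ring
  -- Part 2: the limit
  set G : ℝ → ℝ := fun t => ∫ s in Set.Ioi (1:ℝ), s ^ j * (f (s * t) / f t) with hG_def
  have hint_pow : IntegrableOn (fun s : ℝ => s ^ (j+p)) (Set.Ioi 1) :=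
    integrableOn_Ioi_rpow_of_lt hjp one_pos
  have hGlim : Tendsto G atTop (nhds (-(j+ρ+1))⁻¹) := by
    have hlimint : ∫ s in Set.Ioi (1:ℝ), s ^ (j + ρ) = (-(j+ρ+1))⁻¹ := by
      rw [integral_Ioi_rpow_of_lt (by linarith : j + ρ < -1) one_pos, Real.one_rpow,
        inv_neg, neg_div, one_div]
    rw [hG_def, ← hlimint]
    apply tendsto_integral_filter_of_dominated_convergence (bound := fun s => C * s ^ (j+p))
    · exact Eventually.of_forall (fun t => Measurable.aestronglyMeasurable (by fun_prop))
    · filter_upwards [eventually_ge_atTop T] with t ht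
      rw [ae_restrict_iff' measurableSet_Ioi]
      refine ae_of_all _ fun s hs => ?_
      have hs1 : (1:ℝ) < s := hs
      have hs0 : (0:ℝ) < s := lt_trans one_pos hs1
      have ht0 : (0:ℝ) < t := lt_of_lt_of_le one_pos (le_trans hT1 ht)
      have hft := hfposT t ht
      have hfst : 0 < f (s * t) :=
        hfpos _ (le_trans (le_trans hTApos ht) (le_mul_of_one_le_left ht0.le hs1.le))
      have hratio : f (s * t) / f t ≤ C * s ^ p := by
        rw [div_le_iff₀ hft]
        exact hpot t ht s hs1.le
      have hnorm : ‖s ^ j * (f (s * t) / f t)‖ = s ^ j * (f (s * t) / f t) := by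
        rw [Real.norm_eq_abs, abs_of_nonneg]
        exact mul_nonneg (Real.rpow_nonneg hs0.le j) (div_pos hfst hft).le
      rw [hnorm]
      calc s ^ j * (f (s * t) / f t) ≤ s ^ j * (C * s ^ p) :=
            mul_le_mul_of_nonneg_left hratio (Real.rpow_nonneg hs0.le j)
        _ = C * s ^ (j+p) := by rw [Real.rpow_add hs0]; ring
    · exact hint_pow.const_mul C
    · rw [ae_restrict_iff' measurableSet_Ioi]
      refine ae_of_all _ fun s hs => ?_
      have hs0 : (0:ℝ) < s := lt_trans one_pos hs
      have h := (hRV s hs0).const_mul (s ^ j)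
      rw [Real.rpow_add hs0]
      exact h
  -- eventual positivity of G and rewriting the ratio
  have hGpos : ∀ᶠ t in atTop, 0 < G t :=
    hGlim.eventually (eventually_gt_nhds (inv_pos.2 hδpos))
  have heq : (fun t => t ^ (j + 1) * f t / ∫ ξ in Set.Ioi t, ξ ^ j * f ξ)
      =ᶠ[atTop] fun t => (G t)⁻¹ := by
    filter_upwards [eventually_ge_atTop T, hGpos] with t ht hGt
    have ht0 : (0:ℝ) < t := lt_of_lt_of_le one_pos (le_trans hT1 ht)
    have hft := hfposT t ht
    have hcov : ∫ ξ in Set.Ioi t, ξ ^ j * f ξ = t ^ (j+1) * f t * G t := by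
      have h1 := integral_comp_mul_left_Ioi (fun ξ => ξ ^ j * f ξ) 1 ht0
      rw [mul_one, smul_eq_mul] at h1
      -- h1 : ∫ x in Ioi 1, (t*x)^j * f (t*x) = t⁻¹ * ∫ x in Ioi t, x^j * f x
      have h2 : ∫ x in Set.Ioi (1:ℝ), (t*x) ^ j * f (t*x)
          = (t ^ j * f t) * G t := by
        rw [hG_def, ← integral_const_mul]
        refine setIntegral_congr_fun measurableSet_Ioi fun x hx => ?_
        have hx0 : (0:ℝ) < x := lt_trans one_pos hx
        rw [Real.mul_rpow ht0.le hx0.le, mul_comm t x]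
        field_simp
      rw [h2] at h1
      beta_reduce at h1
      have : ∫ x in Set.Ioi t, x ^ j * f x = t * ((t ^ j * f t) * G t) := by
        rw [h1, ← mul_assoc, mul_inv_cancel₀ ht0.ne', one_mul]
      rw [this, Real.rpow_add ht0, Real.rpow_one]
      ring
    rw [hcov]
    have hne : t ^ (j+1) * f t ≠ 0 := by positivity
    exact div_mul_cancel_left₀ hne (G t)
  constructor
  · exact eventually_atTop.2 ⟨T, hInt⟩
  · have h := hGlim.inv₀ (by positivity)
    rw [inv_inv] at h
    exact h.congr' heq.symm
end

section
/- If f is regularly varying at ∞ with index ρ, then lim_{t→∞} ln f(t) / ln t = ρ. -/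
open Filter Set MeasureTheory
open scoped ENNReal

/-- Uniform convergence theorem core: if `h` is measurable and additively slowly
varying (increments tend to 0), then the increments tend to 0 uniformly for
`u ∈ [0,1]`. -/
lemma uct_aux (h : ℝ → ℝ) (hm : Measurable h)
    (hlim : ∀ u : ℝ, Tendsto (fun x => h (x + u) - h x) atTop (nhds 0)) :
    ∀ ε > (0:ℝ), ∀ᶠ x in atTop, ∀ u ∈ Icc (0:ℝ) 1, |h (x + u) - h x| ≤ ε := by
  intro ε hε
  by_contra hc
  rw [Filter.not_eventually] at hc
  have hseq : ∀ m : ℕ, ∃ x : ℝ, (m : ℝ) ≤ x ∧ ∃ u ∈ Icc (0:ℝ) 1, ε < |h (x + u) - h x| := by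
    intro m
    rcases (frequently_atTop.mp hc (m : ℝ)) with ⟨x, hx, hx'⟩
    push_neg at hx'
    rcases hx' with ⟨u, hu, hu'⟩
    exact ⟨x, hx, u, hu, hu'⟩
  choose x hx u hu hgt using hseq
  have hxt : Tendsto x atTop atTop :=
    tendsto_atTop_mono hx tendsto_natCast_atTop_atTop
  have hyt : Tendsto (fun m => x m + u m) atTop atTop :=
    tendsto_atTop_mono (fun m => le_add_of_nonneg_right (hu m).1) hxt
  set ε3 : ℝ := ε / 3 with hε3
  -- the good sets
  set G : ℕ → Set ℝ := fun n =>
    Icc (0:ℝ) 2 ∩ ⋂ m ∈ Ici n,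
      ({v : ℝ | |h (x m + v) - h (x m)| ≤ ε3} ∩
       {v : ℝ | |h (x m + u m + v) - h (x m + u m)| ≤ ε3}) with hG
  have hmeas : ∀ n, MeasurableSet (G n) := by
    intro n
    apply measurableSet_Icc.inter
    apply MeasurableSet.biInter (to_countable _)
    intro m _
    have m1 : Measurable fun v : ℝ => |h (x m + v) - h (x m)| :=
      ((hm.comp (measurable_const.add measurable_id)).sub measurable_const).abs
    have m2 : Measurable fun v : ℝ => |h (x m + u m + v) - h (x m + u m)| :=
      ((hm.comp (measurable_const.add measurable_id)).sub measurable_const).abs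
    exact (measurableSet_le m1 measurable_const).inter
      (measurableSet_le m2 measurable_const)
  have hmono : Monotone G := by
    intro a b hab
    apply Set.inter_subset_inter_right
    intro v hv
    simp only [Set.mem_iInter] at hv ⊢
    intro m hm'
    exact hv m (le_trans hab hm')
  have hunion : (⋃ n, G n) = Icc (0:ℝ) 2 := by
    apply Set.Subset.antisymm
    · exact Set.iUnion_subset fun n => Set.inter_subset_left
    · intro v hv
      have h1 : Tendsto (fun m => h (x m + v) - h (x m)) atTop (nhds 0) :=
        (hlim v).comp hxt
      have h2 : Tendsto (fun m => h (x m + u m + v) - h (x m + u m)) atTop (nhds 0) :=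
        (hlim v).comp hyt
      have hε3pos : (0:ℝ) < ε3 := by positivity
      have e1 : ∀ᶠ m in atTop, |h (x m + v) - h (x m)| ≤ ε3 := by
        have := h1.eventually (Metric.ball_mem_nhds (0:ℝ) hε3pos)
        filter_upwards [this] with m hm'
        simpa [Real.dist_eq] using le_of_lt hm'
      have e2 : ∀ᶠ m in atTop, |h (x m + u m + v) - h (x m + u m)| ≤ ε3 := by
        have := h2.eventually (Metric.ball_mem_nhds (0:ℝ) hε3pos)
        filter_upwards [this] with m hm'
        simpa [Real.dist_eq] using le_of_lt hm'
      rcases (e1.and e2).exists_forall_of_atTop with ⟨N, hN⟩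
      refine Set.mem_iUnion.mpr ⟨N, hv, ?_⟩
      simp only [Set.mem_iInter]
      intro m hm'
      exact ⟨(hN m hm').1, (hN m hm').2⟩
  -- find N with volume (G N) > 3/2
  have htend : Tendsto (fun n => volume (G n)) atTop (nhds (volume (⋃ n, G n))) :=
    tendsto_measure_iUnion_atTop hmono
  have hvol : volume (⋃ n, G n) = ENNReal.ofReal 2 := by
    rw [hunion, Real.volume_Icc]; norm_num
  have hlarge : ∀ᶠ n in atTop, ENNReal.ofReal (3/2) < volume (G n) := by
    apply htend.eventually
    apply eventually_gt_nhds
    rw [hvol]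
    exact (ENNReal.ofReal_lt_ofReal_iff (by norm_num)).mpr (by norm_num)
  rcases hlarge.exists with ⟨N, hN⟩
  -- translate
  set B : Set ℝ := (fun w => w + -(u N)) ⁻¹' (G N) with hB
  have hBmeas : MeasurableSet B := (hmeas N).preimage (measurable_id.add_const _)
  have hBvol : volume B = volume (G N) := measure_preimage_add_right volume _ _
  have hsub3 : G N ∪ B ⊆ Icc (0:ℝ) 3 := by
    rintro w (hw | hw)
    · rcases hw.1 with ⟨h0, h2⟩
      exact ⟨h0, by linarith⟩
    · rcases hw.1 with ⟨h0, h2⟩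
      dsimp only at h0 h2
      have := (hu N).1; have := (hu N).2
      constructor <;> [linarith; linarith]
  -- intersection nonempty
  have hne : (G N ∩ B).Nonempty := by
    by_contra hemp
    rw [Set.not_nonempty_iff_eq_empty] at hemp
    have hdisj : Disjoint (G N) B := Set.disjoint_iff_inter_eq_empty.mpr hemp
    have hunionvol : volume (G N ∪ B) = volume (G N) + volume B :=
      measure_union hdisj hBmeas
    have h3 : volume (G N ∪ B) ≤ ENNReal.ofReal 3 := by
      calc volume (G N ∪ B) ≤ volume (Icc (0:ℝ) 3) := measure_mono hsub3
      _ = ENNReal.ofReal 3 := by rw [Real.volume_Icc]; norm_num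
    rw [hunionvol, hBvol] at h3
    have : ENNReal.ofReal 3 < volume (G N) + volume (G N) := by
      calc ENNReal.ofReal 3 = ENNReal.ofReal (3/2) + ENNReal.ofReal (3/2) := by
            rw [← ENNReal.ofReal_add (by norm_num) (by norm_num)]; norm_num
      _ < volume (G N) + volume (G N) := ENNReal.add_lt_add hN hN
    exact absurd h3 (not_le.mpr this)
  rcases hne with ⟨w, hwG, hwB⟩
  -- derive contradiction at m = N
  have hmemG : ∀ m ≥ N, |h (x m + w) - h (x m)| ≤ ε3 := by
    intro m hm'
    have := hwG.2
    simp only [Set.mem_iInter] at this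
    exact (this m hm').1
  have hmemB : ∀ m ≥ N, |h (x m + u m + (w + -(u N))) - h (x m + u m)| ≤ ε3 := by
    intro m hm'
    have := hwB.2
    simp only [Set.mem_iInter] at this
    exact (this m hm').2
  have key1 := hmemG N le_rfl
  have key2 := hmemB N le_rfl
  have heq : x N + u N + (w + -(u N)) = x N + w := by ring
  rw [heq] at key2
  have : |h (x N + u N) - h (x N)| ≤ 2 * ε3 := by
    have := abs_sub_le (h (x N + u N)) (h (x N + w)) (h (x N))
    have habs : |h (x N + u N) - h (x N + w)| = |h (x N + w) - h (x N + u N)| :=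
      abs_sub_comm _ _
    calc |h (x N + u N) - h (x N)|
        ≤ |h (x N + u N) - h (x N + w)| + |h (x N + w) - h (x N)| :=
          abs_sub_le _ _ _
      _ ≤ ε3 + ε3 := by rw [habs]; exact add_le_add key2 key1
      _ = 2 * ε3 := by ring
  have := hgt N
  have : ε < 2 * ε3 := lt_of_lt_of_le this ‹|h (x N + u N) - h (x N)| ≤ 2 * ε3›
  rw [hε3] at this
  linarith

/-- If `h` is measurable and additively slowly varying, then `h x / x → 0`. -/
lemma slow_div (h : ℝ → ℝ) (hm : Measurable h)
    (hlim : ∀ u : ℝ, Tendsto (fun x => h (x + u) - h x) atTop (nhds 0)) :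
    Tendsto (fun x => h x / x) atTop (nhds 0) := by
  rw [NormedAddCommGroup.tendsto_nhds_zero]
  intro ε hε
  have hε2 : (0:ℝ) < ε / 2 := by positivity
  rcases (eventually_atTop.mp (uct_aux h hm hlim (ε/2) hε2)) with ⟨X₀, hX₀⟩
  set X : ℝ := max X₀ 1 with hXdef
  have hXb : ∀ x ≥ X, ∀ u ∈ Icc (0:ℝ) 1, |h (x + u) - h x| ≤ ε/2 := by
    intro x hxX u hu
    exact hX₀ x (le_trans (le_max_left _ _) hxX) u hu
  have hX1 : (1:ℝ) ≤ X := le_max_right _ _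
  -- induction claim
  have claim : ∀ n : ℕ, ∀ s ∈ Icc (0:ℝ) 1, |h (X + n + s) - h X| ≤ (n + 1) * (ε/2) := by
    intro n
    induction n with
    | zero =>
      intro s hs
      have := hXb X le_rfl s hs
      simpa using this
    | succ n ih =>
      intro s hs
      have h1 : |h ((X + n + s) + 1) - h (X + n + s)| ≤ ε/2 := by
        apply hXb (X + n + s) _ 1 ⟨zero_le_one, le_rfl⟩
        have : (0:ℝ) ≤ (n:ℝ) := Nat.cast_nonneg n
        have := hs.1
        linarith
      have h2 := ih s hs
      have heq : X + (n + 1 : ℕ) + s = (X + n + s) + 1 := by push_cast; ring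
      rw [heq]
      calc |h ((X + n + s) + 1) - h X|
          ≤ |h ((X + n + s) + 1) - h (X + n + s)| + |h (X + n + s) - h X| :=
            abs_sub_le _ _ _
        _ ≤ ε/2 + (n + 1) * (ε/2) := add_le_add h1 h2
        _ = ((n + 1 : ℕ) + 1 : ℝ) * (ε/2) := by push_cast; ring
  -- pointwise bound
  have hbound : ∀ x ≥ X, |h x - h X| ≤ (x - X + 1) * (ε/2) := by
    intro x hxX
    set n : ℕ := ⌊x - X⌋₊ with hn
    have hnn : (0:ℝ) ≤ x - X := by linarith
    have hfl : (n:ℝ) ≤ x - X := Nat.floor_le hnn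
    have hfl2 : x - X < n + 1 := Nat.lt_floor_add_one _
    set s : ℝ := x - X - n with hs
    have hs0 : 0 ≤ s := by simp only [hs]; linarith
    have hs1 : s ≤ 1 := by simp only [hs]; linarith
    have hx' : x = X + n + s := by simp only [hs]; ring
    have := claim n s ⟨hs0, hs1⟩
    rw [← hx'] at this
    calc |h x - h X| ≤ (n + 1) * (ε/2) := this
      _ ≤ (x - X + 1) * (ε/2) := by nlinarith
  -- finish
  have hCpos : ∀ᶠ x in atTop, ‖h x / x‖ < ε := by
    filter_upwards [eventually_ge_atTop X,
      eventually_gt_atTop ((2/ε) * |h X| + (1 - X)),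
      eventually_gt_atTop (0:ℝ)] with x h1 h2 h3
    have hb := hbound x h1
    have habs : |h x| ≤ |h X| + (x - X + 1) * (ε/2) := by
      have := abs_sub_abs_le_abs_sub (h x) (h X)
      linarith [abs_sub_le (h x) (h X) 0, abs_nonneg (h X),
        (abs_sub_abs_le_abs_sub (h x) (h X)).trans hb]
    have hlt : |h X| + (x - X + 1) * (ε/2) < ε * x := by
      have hx2 : (2/ε) * |h X| + (1 - X) < x := h2
      have hmul : ε/2 * (2/ε * |h X| + (1 - X)) < ε/2 * x :=
        mul_lt_mul_of_pos_left hx2 hε2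
      have hsimp : ε/2 * (2/ε * |h X| + (1 - X)) = |h X| + ε/2 * (1 - X) := by
        field_simp
      rw [hsimp] at hmul
      nlinarith [hmul]
    rw [Real.norm_eq_abs, abs_div, abs_of_pos h3, div_lt_iff₀ h3]
    calc |h x| ≤ |h X| + (x - X + 1) * (ε/2) := habs
      _ < ε * x := hlt
  exact hCpos

/-- If `f` is regularly varying at `∞` with index `ρ`, then `log f t / log t → ρ`. -/
theorem log_div_log_tendsto_of_regularly_varying
    (ρ : ℝ) (f : ℝ → ℝ) (hfmeas : Measurable f)
    (hfpos : ∀ᶠ t in atTop, 0 < f t)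
    (hRV : ∀ ξ : ℝ, 0 < ξ →
        Tendsto (fun t => f (ξ * t) / f t) atTop (nhds (ξ ^ ρ))) :
    Tendsto (fun t => Real.log (f t) / Real.log t) atTop (nhds ρ) := by
  set h : ℝ → ℝ := fun x => Real.log (f (Real.exp x)) - ρ * x with hh
  have hm : Measurable h :=
    (Real.measurable_log.comp (hfmeas.comp Real.measurable_exp)).sub
      (measurable_id.const_mul ρ)
  have hlim : ∀ u : ℝ, Tendsto (fun x => h (x + u) - h x) atTop (nhds 0) := by
    intro u
    have h1 := hRV (Real.exp u) (Real.exp_pos u)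
    have h2 : Tendsto (fun x : ℝ => f (Real.exp u * Real.exp x) / f (Real.exp x))
        atTop (nhds ((Real.exp u) ^ ρ)) := h1.comp Real.tendsto_exp_atTop
    have hne : (Real.exp u) ^ ρ ≠ 0 :=
      ne_of_gt (Real.rpow_pos_of_pos (Real.exp_pos u) ρ)
    have h3 := h2.log hne
    have hlogval : Real.log ((Real.exp u) ^ ρ) = ρ * u := by
      rw [Real.log_rpow (Real.exp_pos u), Real.log_exp]
    rw [hlogval] at h3
    have hev1 : ∀ᶠ x : ℝ in atTop, 0 < f (Real.exp x) :=
      Real.tendsto_exp_atTop.eventually hfpos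
    have hev2 : ∀ᶠ x : ℝ in atTop, 0 < f (Real.exp (x + u)) := by
      have : Tendsto (fun x : ℝ => Real.exp (x + u)) atTop atTop :=
        Real.tendsto_exp_atTop.comp (tendsto_atTop_add_const_right _ u tendsto_id)
      exact this.eventually hfpos
    have heq : ∀ᶠ x : ℝ in atTop,
        Real.log (f (Real.exp u * Real.exp x) / f (Real.exp x)) - ρ * u
          = h (x + u) - h x := by
      filter_upwards [hev1, hev2] with x p1 p2
      have he : Real.exp u * Real.exp x = Real.exp (x + u) := by
        rw [← Real.exp_add]; ring_nf
      rw [he, Real.log_div (ne_of_gt p2) (ne_of_gt p1)]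
      simp only [hh]
      ring
    have h4 : Tendsto (fun x : ℝ =>
        Real.log (f (Real.exp u * Real.exp x) / f (Real.exp x)) - ρ * u)
        atTop (nhds (ρ * u - ρ * u)) := h3.sub_const (ρ * u)
    rw [sub_self] at h4
    exact h4.congr' heq
  have key : Tendsto (fun x => h x / x) atTop (nhds 0) := slow_div h hm hlim
  have comp : Tendsto (fun t => h (Real.log t) / Real.log t) atTop (nhds 0) :=
    key.comp Real.tendsto_log_atTop
  have final : Tendsto (fun t => h (Real.log t) / Real.log t + ρ) atTop (nhds (0 + ρ)) :=
    comp.add_const ρ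
  rw [zero_add] at final
  apply final.congr'
  filter_upwards [eventually_gt_atTop (1:ℝ)] with t ht
  have ht0 : (0:ℝ) < t := lt_trans zero_lt_one ht
  have hlt : 0 < Real.log t := Real.log_pos ht
  have hexp : Real.exp (Real.log t) = t := Real.exp_log ht0
  simp only [hh, hexp]
  field_simp
  ring
end

section
/- (Uniform Convergence Theorem at 0) If L is slowly varying at 0, then for every compact set K ⊂ (0,∞), L(ξt)/L(t) → 1 as t → 0⁺ uniformly in ξ ∈ K. -/
open Filter Set MeasureTheory


/-- Additive uniform convergence theorem. -/
theorem additive_uct (f : ℝ → ℝ) (hf : Measurable f)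
    (h : ∀ u : ℝ, Tendsto (fun x => f (x + u) - f x) atTop (nhds 0)) (A : ℝ) :
    TendstoUniformlyOn (fun x u => f (x + u) - f x) (fun _ => 0) atTop (Icc (-A) A) := by
  by_contra hcon
  rw [Metric.tendstoUniformlyOn_iff] at hcon
  push_neg at hcon
  obtain ⟨ε, hε, hfreq⟩ := hcon
  rw [Filter.frequently_atTop] at hfreq
  -- extract sequences xₙ → ∞, uₙ ∈ Icc (-A) A with |f (xₙ+uₙ) - f xₙ| ≥ ε
  choose X hX hP using hfreq
  set xs : ℕ → ℝ := fun n => X (n : ℝ) with hxs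
  have hxge : ∀ n : ℕ, (n : ℝ) ≤ xs n := fun n => hX _
  have hxtop : Tendsto xs atTop atTop :=
    tendsto_atTop_mono hxge tendsto_natCast_atTop_atTop
  have hPn : ∀ n : ℕ, ∃ u ∈ Icc (-A) A, ε ≤ dist (0:ℝ) (f (xs n + u) - f (xs n)) := by
    intro n
    have h' := hP (n : ℝ)
    obtain ⟨u, hu1, hu2⟩ := h'
    exact ⟨u, hu1, hu2⟩
  choose us hus hdist using hPn
  have hytop : Tendsto (fun n => xs n + us n) atTop atTop := by
    apply tendsto_atTop_mono (g := fun n => xs n + us n) (f := fun n => xs n + (-A))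
    · intro n; exact add_le_add_right (hus n).1 _
    · exact hxtop.atTop_add tendsto_const_nhds
  -- the two sequences of functions
  set g : ℕ → ℝ → ℝ := fun n u => f (xs n + u) - f (xs n) with hg
  set h2 : ℕ → ℝ → ℝ := fun n v => f (xs n + us n + v) - f (xs n + us n) with hh2
  have hgm : ∀ n, StronglyMeasurable (g n) := by
    intro n
    exact ((hf.comp (measurable_const.add measurable_id)).sub measurable_const).stronglyMeasurable
  have hhm : ∀ n, StronglyMeasurable (h2 n) := by
    intro n
    exact ((hf.comp (measurable_const.add measurable_id)).sub measurable_const).stronglyMeasurable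
  have hgtend : ∀ u : ℝ, Tendsto (fun n => g n u) atTop (nhds 0) := fun u => (h u).comp hxtop
  have hhtend : ∀ v : ℝ, Tendsto (fun n => h2 n v) atTop (nhds 0) := fun v => (h v).comp hytop
  -- Egorov on J = Icc (-A-1) (A+1) for g
  have hJm : MeasurableSet (Icc (-A-1) (A+1)) := measurableSet_Icc
  have hJfin : volume (Icc (-A-1) (A+1)) ≠ ⊤ := by
    rw [Real.volume_Icc]; exact ENNReal.ofReal_ne_top
  obtain ⟨t₁, ht₁sub, ht₁m, ht₁meas, hgu⟩ :=
    MeasureTheory.tendstoUniformlyOn_of_ae_tendsto (μ := volume) hgm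
      (stronglyMeasurable_const) hJm hJfin
      (Eventually.of_forall (fun u _ => hgtend u)) (ε := 1/4) (by norm_num)
  -- Egorov on J' = Icc (-1) 1 for h2
  have hJ'm : MeasurableSet (Icc (-1:ℝ) 1) := measurableSet_Icc
  have hJ'fin : volume (Icc (-1:ℝ) 1) ≠ ⊤ := by
    rw [Real.volume_Icc]; exact ENNReal.ofReal_ne_top
  obtain ⟨t₂, ht₂sub, ht₂m, ht₂meas, hhu⟩ :=
    MeasureTheory.tendstoUniformlyOn_of_ae_tendsto (μ := volume) hhm
      (stronglyMeasurable_const) hJ'm hJ'fin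
      (Eventually.of_forall (fun v _ => hhtend v)) (ε := 1/4) (by norm_num)
  rw [Metric.tendstoUniformlyOn_iff] at hgu hhu
  obtain ⟨N₁, hN₁⟩ := (hgu (ε/2) (half_pos hε)).exists_forall_of_atTop
  obtain ⟨N₂, hN₂⟩ := (hhu (ε/2) (half_pos hε)).exists_forall_of_atTop
  set n := max N₁ N₂ with hn
  -- the translated set
  set T : Set ℝ := (fun w => -us n + w) ⁻¹' (Icc (-1:ℝ) 1 \ t₂) with hT
  have hTmeas : volume T = volume (Icc (-1:ℝ) 1 \ t₂) :=
    measure_preimage_add volume (-us n) _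
  have hTsub : T ⊆ Icc (-A-1) (A+1) := by
    intro w hw
    have hw' : -us n + w ∈ Icc (-1:ℝ) 1 := hw.1
    have h1 := (hus n).1
    have h2 := (hus n).2
    constructor
    · have := hw'.1; linarith
    · have := hw'.2; linarith
  -- the intersection is nonempty
  have hne : (T ∩ (Icc (-A-1) (A+1) \ t₁)).Nonempty := by
    rw [Set.nonempty_iff_ne_empty]
    intro hemp
    have h1 : volume (Icc (-1:ℝ) 1) ≤ volume t₂ + volume (Icc (-1:ℝ) 1 \ t₂) := by
      refine le_trans (measure_mono ?_) (measure_union_le _ _)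
      intro v hv
      by_cases hvt : v ∈ t₂
      · exact Or.inl hvt
      · exact Or.inr ⟨hv, hvt⟩
    have h2 : volume T ≤ volume t₁ + volume (T ∩ (Icc (-A-1) (A+1) \ t₁)) := by
      refine le_trans (measure_mono ?_) (measure_union_le _ _)
      intro w hw
      by_cases hwt : w ∈ t₁
      · exact Or.inl hwt
      · exact Or.inr ⟨hw, hTsub hw, hwt⟩
    rw [hemp, measure_empty, add_zero] at h2
    rw [hTmeas] at h2
    have h3 : volume (Icc (-1:ℝ) 1) ≤ volume t₂ + volume t₁ := le_trans h1 (by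
      exact add_le_add_right h2 _)
    rw [Real.volume_Icc] at h3
    have : (ENNReal.ofReal (1 - (-1):ℝ)) ≤ ENNReal.ofReal (1/4) + ENNReal.ofReal (1/4) :=
      le_trans h3 (add_le_add ht₂meas ht₁meas)
    rw [← ENNReal.ofReal_add (by norm_num) (by norm_num)] at this
    rw [ENNReal.ofReal_le_ofReal_iff (by norm_num)] at this
    norm_num at this
  obtain ⟨w, hwT, hwS⟩ := hne
  -- derive the contradiction
  have hgw : dist (0:ℝ) (g n w) < ε/2 := hN₁ n (le_max_left _ _) w hwS
  have hhv : dist (0:ℝ) (h2 n (-us n + w)) < ε/2 := hN₂ n (le_max_right _ _) _ hwT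
  have hkey : f (xs n + us n) - f (xs n) = g n w - h2 n (-us n + w) := by
    simp only [hg, hh2]
    ring_nf
  have habs := hdist n
  rw [Real.dist_eq] at hgw hhv habs
  rw [hkey] at habs
  simp only [zero_sub, abs_neg] at hgw hhv habs
  have : |g n w - h2 n (-us n + w)| ≤ |g n w| + |h2 n (-us n + w)| := abs_sub _ _
  linarith

/-- Uniform Convergence Theorem for slowly varying functions at `0`. -/
theorem uniform_convergence_slowly_varying_at_zero
    (c : ℝ) (hc : 0 < c) (L : ℝ → ℝ) (hLmeas : Measurable L)
    (hLpos : ∀ t ∈ Set.Ioc 0 c, 0 < L t)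
    (hSV : ∀ ξ : ℝ, 0 < ξ →
        Tendsto (fun t => L (ξ * t) / L t) (nhdsWithin 0 (Set.Ioi 0)) (nhds 1)) :
    ∀ K : Set ℝ, IsCompact K → K ⊆ Set.Ioi 0 →
      TendstoUniformlyOn (fun t ξ => L (ξ * t) / L t) (fun _ => 1)
        (nhdsWithin 0 (Set.Ioi 0)) K := by
  set f : ℝ → ℝ := fun x => Real.log (L (Real.exp (-x))) with hfdef
  have hfm : Measurable f :=
    Real.measurable_log.comp (hLmeas.comp (Real.measurable_exp.comp measurable_neg))
  have hexp : Tendsto (fun x : ℝ => Real.exp (-x)) atTop (nhdsWithin 0 (Set.Ioi 0)) := by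
    apply tendsto_nhdsWithin_of_tendsto_nhds_of_eventually_within
    · exact Real.tendsto_exp_atBot.comp tendsto_neg_atTop_atBot
    · exact Eventually.of_forall fun x => Real.exp_pos _
  have hf : ∀ u : ℝ, Tendsto (fun x => f (x + u) - f x) atTop (nhds 0) := by
    intro u
    have hξ : (0:ℝ) < Real.exp (-u) := Real.exp_pos _
    have h1 : Tendsto (fun x : ℝ => L (Real.exp (-u) * Real.exp (-x)) / L (Real.exp (-x)))
        atTop (nhds 1) := (hSV _ hξ).comp hexp
    have h2 : Tendsto (fun x : ℝ =>
        Real.log (L (Real.exp (-u) * Real.exp (-x)) / L (Real.exp (-x)))) atTop (nhds 0) := by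
      have := (Real.continuousAt_log one_ne_zero).tendsto.comp h1
      simpa [Function.comp_def] using this
    apply h2.congr'
    filter_upwards [eventually_ge_atTop (-Real.log c), eventually_ge_atTop (-Real.log c - u)]
      with x hx1 hx2
    have ht1 : Real.exp (-x) ∈ Set.Ioc 0 c := by
      refine ⟨Real.exp_pos _, ?_⟩
      rw [show c = Real.exp (Real.log c) from (Real.exp_log hc).symm]
      exact Real.exp_le_exp.2 (by linarith)
    have ht2 : Real.exp (-u) * Real.exp (-x) ∈ Set.Ioc 0 c := by
      rw [← Real.exp_add]
      refine ⟨Real.exp_pos _, ?_⟩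
      rw [show c = Real.exp (Real.log c) from (Real.exp_log hc).symm]
      exact Real.exp_le_exp.2 (by linarith)
    rw [Real.log_div (ne_of_gt (hLpos _ ht2)) (ne_of_gt (hLpos _ ht1))]
    simp only [hfdef]
    rw [show -(x + u) = -u + -x by ring, Real.exp_add]
  have hU : ∀ A : ℝ, TendstoUniformlyOn (fun x u => f (x + u) - f x) (fun _ => 0)
      atTop (Icc (-A) A) := additive_uct f hfm hf
  intro K hK hKsub
  rcases K.eq_empty_or_nonempty with hKe | hKne
  · rw [hKe]; exact tendstoUniformlyOn_empty
  obtain ⟨a, haK, ha⟩ := hK.exists_isLeast hKne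
  obtain ⟨b, hbK, hb⟩ := hK.exists_isGreatest hKne
  have ha0 : 0 < a := hKsub haK
  have hb0 : 0 < b := hKsub hbK
  set A : ℝ := max |Real.log a| |Real.log b| with hA
  rw [Metric.tendstoUniformlyOn_iff]
  intro ε hε
  -- δ such that |d| < δ → |exp d - 1| < ε
  have hcont : ContinuousAt (fun d : ℝ => Real.exp d) 0 := Real.continuous_exp.continuousAt
  rw [Metric.continuousAt_iff] at hcont
  obtain ⟨δ, hδ, hδim⟩ := hcont ε hε
  have hUA := hU A
  rw [Metric.tendstoUniformlyOn_iff] at hUA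
  obtain ⟨X, hX⟩ := (hUA δ hδ).exists_forall_of_atTop
  set η : ℝ := min (Real.exp (-X)) (min c (c / b)) with hη
  have hηpos : 0 < η := lt_min (Real.exp_pos _) (lt_min hc (div_pos hc hb0))
  have hmem : Set.Ioo (0:ℝ) η ∈ nhdsWithin (0:ℝ) (Set.Ioi 0) :=
    Ioo_mem_nhdsGT_of_mem ⟨le_refl _, hηpos⟩
  filter_upwards [hmem] with t ht
  obtain ⟨ht0, htη⟩ := ht
  intro ξ hξK
  have hξ0 : 0 < ξ := hKsub hξK
  have hξa : a ≤ ξ := ha hξK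
  have hξb : ξ ≤ b := hb hξK
  set x : ℝ := -Real.log t with hx
  set u : ℝ := -Real.log ξ with hu
  have hxt : Real.exp (-x) = t := by rw [hx, neg_neg, Real.exp_log ht0]
  have hxu : Real.exp (-(x + u)) = ξ * t := by
    rw [show -(x+u) = -u + -x by ring, Real.exp_add, hx, hu, neg_neg, neg_neg,
      Real.exp_log ht0, Real.exp_log hξ0]
  have huA : u ∈ Icc (-A) A := by
    constructor
    · have h1 : Real.log ξ ≤ Real.log b := Real.log_le_log hξ0 hξb
      have h2 : Real.log b ≤ |Real.log b| := le_abs_self _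
      have : |Real.log b| ≤ A := le_max_right _ _
      simp only [hu]; linarith
    · have h1 : Real.log a ≤ Real.log ξ := Real.log_le_log ha0 hξa
      have h2 : -|Real.log a| ≤ Real.log a := neg_abs_le _
      have : |Real.log a| ≤ A := le_max_left _ _
      simp only [hu]; linarith
  have hxX : X ≤ x := by
    have : t ≤ Real.exp (-X) := le_of_lt (lt_of_lt_of_le htη (min_le_left _ _))
    have := Real.log_le_log ht0 this
    rw [Real.log_exp] at this
    simp only [hx]; linarith
  have hd := hX x hxX u huA
  rw [Real.dist_eq] at hd
  simp only [zero_sub, abs_neg] at hd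
  have htc : t ∈ Set.Ioc 0 c :=
    ⟨ht0, le_of_lt (lt_of_lt_of_le htη (le_trans (min_le_right _ _) (min_le_left _ _)))⟩
  have hξtc : ξ * t ∈ Set.Ioc 0 c := by
    refine ⟨mul_pos hξ0 ht0, ?_⟩
    have h1 : t ≤ c / b := le_of_lt (lt_of_lt_of_le htη (le_trans (min_le_right _ _)
      (min_le_right _ _)))
    calc ξ * t ≤ b * t := mul_le_mul_of_nonneg_right hξb (le_of_lt ht0)
      _ ≤ b * (c / b) := mul_le_mul_of_nonneg_left h1 (le_of_lt hb0)
      _ = c := by field_simp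
  have hratio : L (ξ * t) / L t = Real.exp (f (x + u) - f x) := by
    simp only [hfdef]
    rw [hxu, hxt, Real.exp_sub, Real.exp_log (hLpos _ hξtc), Real.exp_log (hLpos _ htc)]
  rw [hratio]
  have := hδim (show dist (f (x+u) - f x) 0 < δ by rw [Real.dist_eq, sub_zero]; exact hd)
  rw [Real.exp_zero] at this
  rw [dist_comm]
  exact this
end
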